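/- arXiv:1603.08176 — 3 statements merged into one kernel-verified Lean document; each statement's English description precedes it below -/
import Mathlib

section
/- Control of the relative entropy by the relative total energy (Lemma on I, part (ii)): Assume (F̄, v̄, θ̄) ∈ Γ_{M,δ}, that ψ(F,θ) ∈ C³(ℝ^{d×d} × [0,∞)) and η(F,θ), Σ(F,θ) ∈ C²(ℝ^{d×d} × [0,∞)) satisfy the constitutive relations Σ = ∂ψ/∂F, η = −∂ψ/∂θ, e = ψ + θη, and the Gibbs conditions ψ_FF > 0 and η_θ > 0. Under the growth hypotheses (a1), (a2), (a3), there exists a constant C > 0 such that |η(F,θ|F̄,θ̄)| ≤ C · I(F,v,θ|F̄,v̄,θ̄) for all (F,v,θ) and for all (F̄, v̄, θ̄) ∈ Γ_{M,δ}, where η(F,θ|F̄,θ̄) = η(F,θ) − η(F̄,θ̄) − η_F(F̄,θ̄):(F − F̄) − η_θ(F̄,θ̄)(θ − θ̄). -/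
open scoped RealInnerProductSpace Topology
open MeasureTheory

noncomputable section

/-- linear absorbed by power: `a*t ≤ ε t^p + C`. -/
lemma linpow (p a ε : ℝ) (hp : 1 < p) (ha : 0 ≤ a) (hε : 0 < ε) :
    ∃ C : ℝ, 0 ≤ C ∧ ∀ t : ℝ, 0 ≤ t → a * t ≤ ε * t ^ p + C := by
  set T : ℝ := max 1 ((a / ε) ^ (1 / (p - 1))) with hT
  have hT1 : 1 ≤ T := le_max_left _ _
  have hT0 : 0 ≤ T := by linarith
  refine ⟨a * T, mul_nonneg ha hT0, fun t ht => ?_⟩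
  rcases le_total t T with h | h
  · have h1 : a * t ≤ a * T := mul_le_mul_of_nonneg_left h ha
    have h2 : 0 ≤ ε * t ^ p := mul_nonneg hε.le (Real.rpow_nonneg ht p)
    linarith
  · have ht1 : 1 ≤ t := le_trans hT1 h
    have ht0 : 0 < t := by linarith
    have hkey : a ≤ ε * t ^ (p - 1) := by
      have h3 : (a / ε) ^ (1 / (p - 1)) ≤ t := le_trans (le_max_right _ _) h
      have hp1 : 0 < p - 1 := by linarith
      have h4 : ((a / ε) ^ (1 / (p - 1))) ^ (p - 1) ≤ t ^ (p - 1) :=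
        Real.rpow_le_rpow (Real.rpow_nonneg (div_nonneg ha hε.le) _) h3 hp1.le
      have h5 : ((a / ε) ^ (1 / (p - 1))) ^ (p - 1) = a / ε := by
        rw [← Real.rpow_mul (div_nonneg ha hε.le), one_div, inv_mul_cancel₀ hp1.ne',
          Real.rpow_one]
      rw [h5] at h4
      calc a = ε * (a / ε) := by field_simp
        _ ≤ ε * t ^ (p - 1) := mul_le_mul_of_nonneg_left h4 hε.le
    have h6 : a * t ≤ ε * t ^ (p - 1) * t := mul_le_mul_of_nonneg_right hkey ht
    have h7 : ε * t ^ (p - 1) * t = ε * t ^ p := by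
      rw [mul_assoc]
      congr 1
      nth_rewrite 2 [← Real.rpow_one t]
      rw [← Real.rpow_add ht0]
      ring_nf
    have h8 : 0 ≤ a * T := mul_nonneg ha hT0
    calc a * t ≤ ε * t ^ p := by rw [← h7]; simpa using h6
      _ ≤ ε * t ^ p + a * T := by linarith

/-- if `t^p ≤ R` then `t ≤ max 1 R`. -/
lemma le_max_one_of_rpow_le {p t R : ℝ} (hp : 1 ≤ p) (ht : 0 ≤ t) (h : t ^ p ≤ R) :
    t ≤ max 1 R := by
  rcases le_total t 1 with h1 | h1
  · exact le_trans h1 (le_max_left _ _)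
  · have : t ≤ t ^ p := by
      calc t = t ^ (1:ℝ) := (Real.rpow_one t).symm
        _ ≤ t ^ p := Real.rpow_le_rpow_of_exponent_le h1 hp
    exact le_trans (le_trans this h) (le_max_right _ _)

set_option maxHeartbeats 1000000 in
/-- **Lemma 5.2 (ii): control of the relative entropy by the relative total energy.**
For `(F̄,v̄,θ̄) ∈ Γ_{M,δ}`, under the constitutive relations, the Gibbs conditions and
the growth hypotheses (a1)–(a3), there is `C > 0` with
`|η(F,θ|F̄,θ̄)| ≤ C · I(F,v,θ|F̄,v̄,θ̄)` for all `(F,v,θ)`, where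
`η(F,θ|F̄,θ̄) = η(F,θ) − η(F̄,θ̄) − η_F(F̄,θ̄):(F−F̄) − η_θ(F̄,θ̄)(θ−θ̄)`. -/
theorem relative_entropy_controlled_by_relative_total_energy
    (d : ℕ) (p q : ℝ) (hp : 1 < p) (hq : 1 < q)
    (ψ : EuclideanSpace ℝ (Fin d × Fin d) → ℝ → ℝ)
    (Sig : EuclideanSpace ℝ (Fin d × Fin d) → ℝ → EuclideanSpace ℝ (Fin d × Fin d))
    (η : EuclideanSpace ℝ (Fin d × Fin d) → ℝ → ℝ)
    -- regularity: ψ ∈ C³, η, Σ ∈ C² on ℝ^{d×d} × [0,∞)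
    (hψreg : ContDiffOn ℝ 3 (fun z : EuclideanSpace ℝ (Fin d × Fin d) × ℝ => ψ z.1 z.2)
      (Set.univ ×ˢ Set.Ici 0))
    (hηreg : ContDiffOn ℝ 2 (fun z : EuclideanSpace ℝ (Fin d × Fin d) × ℝ => η z.1 z.2)
      (Set.univ ×ˢ Set.Ici 0))
    (hSigreg : ContDiffOn ℝ 2 (fun z : EuclideanSpace ℝ (Fin d × Fin d) × ℝ => Sig z.1 z.2)
      (Set.univ ×ˢ Set.Ici 0))
    -- constitutive relations: Σ = ∂ψ/∂F, η = −∂ψ/∂θ (and e = ψ + θη)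
    (hconstSig : ∀ F θ, 0 ≤ θ → ∀ V, ⟪Sig F θ, V⟫ = fderiv ℝ (fun F' => ψ F' θ) F V)
    (hconstη : ∀ F θ, 0 ≤ θ → η F θ = - deriv (fun s => ψ F s) θ)
    -- Gibbs thermodynamic stability: ψ_FF > 0 and η_θ > 0
    (hGibbsF : ∀ F θ, 0 ≤ θ → ∀ V : EuclideanSpace ℝ (Fin d × Fin d), V ≠ 0 →
      0 < iteratedFDeriv ℝ 2 (fun F' => ψ F' θ) F ![V, V])
    (hGibbsθ : ∀ F θ, 0 ≤ θ → 0 < deriv (fun s => η F s) θ)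
    -- (a1): growth of the internal energy e = ψ + θ η
    (c : ℝ) (hc : 0 < c)
    (ha1 : ∀ F θ, 0 ≤ θ →
      c * (‖F‖ ^ p + θ ^ q) - c ≤ ψ F θ + θ * η F θ ∧
      ψ F θ + θ * η F θ ≤ c * (‖F‖ ^ p + θ ^ q) + c)
    -- (a2): |Σ(F,θ)|/(|F|^p + θ^q) → 0
    (ha2 : ∀ ε > (0:ℝ), ∃ R₀, ∀ F θ, 0 ≤ θ → R₀ ≤ ‖F‖ ^ p + θ ^ q →
      ‖Sig F θ‖ ≤ ε * (‖F‖ ^ p + θ ^ q))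
    -- (a3): |η(F,θ)|/(|F|^p + θ^q) → 0
    (ha3 : ∀ ε > (0:ℝ), ∃ R₀, ∀ F θ, 0 ≤ θ → R₀ ≤ ‖F‖ ^ p + θ ^ q →
      |η F θ| ≤ ε * (‖F‖ ^ p + θ ^ q))
    -- the compact set Γ_{M,δ}
    (M δ : ℝ) (hM : 0 < M) (hδ : 0 < δ) :
    ∃ C > (0:ℝ),
      ∀ (Fb : EuclideanSpace ℝ (Fin d × Fin d)) (vb : EuclideanSpace ℝ (Fin d)) (θb : ℝ),
        ‖Fb‖ ≤ M → ‖vb‖ ≤ M → δ ≤ θb → θb ≤ M →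
        ∀ (F : EuclideanSpace ℝ (Fin d × Fin d)) (v : EuclideanSpace ℝ (Fin d)) (θ : ℝ),
          0 ≤ θ →
          |η F θ - η Fb θb - fderiv ℝ (fun F' => η F' θb) Fb (F - Fb)
              - deriv (fun s => η Fb s) θb * (θ - θb)| ≤
            C * ((ψ F θ - ψ Fb θb - ⟪Sig Fb θb, F - Fb⟫ + η Fb θb * (θ - θb))
                + (η F θ - η Fb θb) * (θ - θb) + (1/2) * ‖v - vb‖ ^ 2) := by
  -- global sublinear bound on η
  have hηglob : ∀ ε : ℝ, 0 < ε → ∃ Cb : ℝ, 0 ≤ Cb ∧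
      ∀ (F : EuclideanSpace ℝ (Fin d × Fin d)) (θ : ℝ), 0 ≤ θ →
        |η F θ| ≤ ε * (‖F‖ ^ p + θ ^ q) + Cb := by
    intro ε hε
    obtain ⟨R₀, hR₀⟩ := ha3 ε hε
    have hbox : IsCompact ((Metric.closedBall (0 : EuclideanSpace ℝ (Fin d × Fin d)) (max 1 R₀))
        ×ˢ Set.Icc (0:ℝ) (max 1 R₀)) := (isCompact_closedBall _ _).prod isCompact_Icc
    have hsub : (Metric.closedBall (0 : EuclideanSpace ℝ (Fin d × Fin d)) (max 1 R₀))
        ×ˢ Set.Icc (0:ℝ) (max 1 R₀) ⊆ Set.univ ×ˢ Set.Ici 0 := by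
      rintro ⟨z1, z2⟩ hz
      exact ⟨Set.mem_univ _, hz.2.1⟩
    obtain ⟨Cb, hCb⟩ := hbox.exists_bound_of_continuousOn ((hηreg.continuousOn).mono hsub)
    refine ⟨max Cb 0, le_max_right _ _, ?_⟩
    intro F θ hθ
    have hεP : 0 ≤ ε * (‖F‖ ^ p + θ ^ q) := by
      have h1 : (0:ℝ) ≤ ‖F‖ ^ p := Real.rpow_nonneg (norm_nonneg _) _
      have h2 : (0:ℝ) ≤ θ ^ q := Real.rpow_nonneg hθ _
      positivity
    rcases le_or_gt R₀ (‖F‖ ^ p + θ ^ q) with h | h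
    · have := hR₀ F θ hθ h
      have h2 : (0:ℝ) ≤ max Cb 0 := le_max_right _ _
      linarith
    · have h1 : (0:ℝ) ≤ ‖F‖ ^ p := Real.rpow_nonneg (norm_nonneg _) _
      have h2 : (0:ℝ) ≤ θ ^ q := Real.rpow_nonneg hθ _
      have hF : ‖F‖ ≤ max 1 R₀ :=
        le_max_one_of_rpow_le hp.le (norm_nonneg _) (by linarith)
      have hθB : θ ≤ max 1 R₀ := le_max_one_of_rpow_le hq.le hθ (by linarith)
      have hmem : ((F, θ) : EuclideanSpace ℝ (Fin d × Fin d) × ℝ) ∈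
          (Metric.closedBall (0 : EuclideanSpace ℝ (Fin d × Fin d)) (max 1 R₀))
          ×ˢ Set.Icc (0:ℝ) (max 1 R₀) :=
        ⟨mem_closedBall_zero_iff.mpr hF, hθ, hθB⟩
      have h3 := hCb (F, θ) hmem
      rw [Real.norm_eq_abs] at h3
      have h4 : |η F θ| ≤ max Cb 0 := le_trans h3 (le_max_left _ _)
      linarith
  -- bounds on the compact set Γ
  have hΓ : ∃ CΓ : ℝ, 0 ≤ CΓ ∧
      ∀ (Fb : EuclideanSpace ℝ (Fin d × Fin d)) (θb : ℝ), ‖Fb‖ ≤ M → δ ≤ θb → θb ≤ M →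
        |ψ Fb θb| ≤ CΓ ∧ ‖Sig Fb θb‖ ≤ CΓ ∧ |η Fb θb| ≤ CΓ ∧
        ‖fderiv ℝ (fun z : EuclideanSpace ℝ (Fin d × Fin d) × ℝ => η z.1 z.2) (Fb, θb)‖ ≤ CΓ
      := by
    have hbox : IsCompact ((Metric.closedBall (0 : EuclideanSpace ℝ (Fin d × Fin d)) M)
        ×ˢ Set.Icc δ M) := (isCompact_closedBall _ _).prod isCompact_Icc
    have hsub : (Metric.closedBall (0 : EuclideanSpace ℝ (Fin d × Fin d)) M)
        ×ˢ Set.Icc δ M ⊆ Set.univ ×ˢ Set.Ici 0 := by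
      rintro ⟨z1, z2⟩ hz
      exact ⟨Set.mem_univ _, le_trans hδ.le hz.2.1⟩
    obtain ⟨C1, hC1⟩ := hbox.exists_bound_of_continuousOn ((hψreg.continuousOn).mono hsub)
    obtain ⟨C2, hC2⟩ := hbox.exists_bound_of_continuousOn ((hSigreg.continuousOn).mono hsub)
    obtain ⟨C3, hC3⟩ := hbox.exists_bound_of_continuousOn ((hηreg.continuousOn).mono hsub)
    have hcont4 : ContinuousOn
        (fun z : EuclideanSpace ℝ (Fin d × Fin d) × ℝ =>
          fderiv ℝ (fun z : EuclideanSpace ℝ (Fin d × Fin d) × ℝ => η z.1 z.2) z)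
        ((Metric.closedBall (0 : EuclideanSpace ℝ (Fin d × Fin d)) M) ×ˢ Set.Icc δ M) := by
      intro z hz
      have hnhds : Set.univ ×ˢ Set.Ici (0:ℝ) ∈ nhds z := by
        have : Set.Ici (0:ℝ) ∈ nhds z.2 := Ici_mem_nhds (lt_of_lt_of_le hδ hz.2.1)
        have h' := prod_mem_nhds (Filter.univ_mem (f := nhds z.1)) this
        simpa using h'
      have hCd : ContDiffAt ℝ 2 (fun z : EuclideanSpace ℝ (Fin d × Fin d) × ℝ => η z.1 z.2) z :=
        hηreg.contDiffAt hnhds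
      have : ContDiffAt ℝ 1
          (fderiv ℝ (fun z : EuclideanSpace ℝ (Fin d × Fin d) × ℝ => η z.1 z.2)) z :=
        hCd.fderiv_right (by norm_num)
      exact this.continuousAt.continuousWithinAt
    obtain ⟨C4, hC4⟩ := hbox.exists_bound_of_continuousOn hcont4
    refine ⟨max 0 (max (max C1 C2) (max C3 C4)), le_max_left _ _, ?_⟩
    intro Fb θb hFb hθb1 hθb2
    have hmem : ((Fb, θb) : EuclideanSpace ℝ (Fin d × Fin d) × ℝ) ∈
        (Metric.closedBall (0 : EuclideanSpace ℝ (Fin d × Fin d)) M) ×ˢ Set.Icc δ M :=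
      ⟨mem_closedBall_zero_iff.mpr hFb, hθb1, hθb2⟩
    have h1 := hC1 _ hmem
    have h2 := hC2 _ hmem
    have h3 := hC3 _ hmem
    have h4 := hC4 _ hmem
    rw [Real.norm_eq_abs] at h1 h3
    refine ⟨?_, ?_, ?_, ?_⟩
    · exact le_trans h1 (le_trans (le_trans (le_max_left _ _) (le_max_left _ _)) (le_max_right _ _))
    · exact le_trans h2 (le_trans (le_trans (le_max_right _ _) (le_max_left _ _)) (le_max_right _ _))
    · exact le_trans h3 (le_trans (le_trans (le_max_left _ _) (le_max_right _ _)) (le_max_right _ _))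
    · exact le_trans h4 (le_trans (le_trans (le_max_right _ _) (le_max_right _ _)) (le_max_right _ _))
  obtain ⟨CΓ, hCΓ0, hCΓ⟩ := hΓ
  -- the sum of the two partial derivatives is the full derivative
  have hpart : ∀ (Fb : EuclideanSpace ℝ (Fin d × Fin d)) (θb : ℝ), 0 < θb →
      ∀ (W : EuclideanSpace ℝ (Fin d × Fin d)) (τ : ℝ),
      fderiv ℝ (fun F' => η F' θb) Fb W + deriv (fun s => η Fb s) θb * τ
        = fderiv ℝ (fun z : EuclideanSpace ℝ (Fin d × Fin d) × ℝ => η z.1 z.2) (Fb, θb) (W, τ)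
      := by
    intro Fb θb hθb W τ
    have hnhds : Set.univ ×ˢ Set.Ici (0:ℝ) ∈ nhds ((Fb, θb) :
        EuclideanSpace ℝ (Fin d × Fin d) × ℝ) := by
      have h0 : Set.Ici (0:ℝ) ∈ nhds θb := Ici_mem_nhds hθb
      have h' := prod_mem_nhds (Filter.univ_mem (f := nhds Fb)) h0
      simpa using h'
    have hCd : ContDiffAt ℝ 2 (fun z : EuclideanSpace ℝ (Fin d × Fin d) × ℝ => η z.1 z.2)
        (Fb, θb) := hηreg.contDiffAt hnhds
    have hdiff : DifferentiableAt ℝ (fun z : EuclideanSpace ℝ (Fin d × Fin d) × ℝ => η z.1 z.2)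
        (Fb, θb) := hCd.differentiableAt (by norm_num)
    have hηat : HasFDerivAt (fun z : EuclideanSpace ℝ (Fin d × Fin d) × ℝ => η z.1 z.2)
        (fderiv ℝ (fun z : EuclideanSpace ℝ (Fin d × Fin d) × ℝ => η z.1 z.2) (Fb, θb))
        (Fb, θb) := hdiff.hasFDerivAt
    -- F-slice derivative
    have hsl1 : HasFDerivAt (fun F' => η F' θb)
        ((fderiv ℝ (fun z : EuclideanSpace ℝ (Fin d × Fin d) × ℝ => η z.1 z.2) (Fb, θb)).comp
          (ContinuousLinearMap.inl ℝ (EuclideanSpace ℝ (Fin d × Fin d)) ℝ)) Fb :=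
      HasFDerivAt.comp Fb (f := fun e : EuclideanSpace ℝ (Fin d × Fin d) => (e, θb)) hηat (hasFDerivAt_prodMk_left (𝕜 := ℝ) Fb θb)
    have e1 : fderiv ℝ (fun F' => η F' θb) Fb (W) =
        fderiv ℝ (fun z : EuclideanSpace ℝ (Fin d × Fin d) × ℝ => η z.1 z.2) (Fb, θb) (W, 0) := by
      rw [hsl1.fderiv]
      simp
    -- θ-slice derivative
    have hsl2 : HasDerivAt (fun s => η Fb s)
        (fderiv ℝ (fun z : EuclideanSpace ℝ (Fin d × Fin d) × ℝ => η z.1 z.2) (Fb, θb)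
          ((0 : EuclideanSpace ℝ (Fin d × Fin d)), (1:ℝ))) θb :=
      hηat.comp_hasDerivAt θb (HasDerivAt.prodMk (hasDerivAt_const θb Fb) (hasDerivAt_id θb))
    have e2 : deriv (fun s => η Fb s) θb =
        fderiv ℝ (fun z : EuclideanSpace ℝ (Fin d × Fin d) × ℝ => η z.1 z.2) (Fb, θb)
          ((0 : EuclideanSpace ℝ (Fin d × Fin d)), (1:ℝ)) := hsl2.deriv
    have e3 : ((W, τ) : EuclideanSpace ℝ (Fin d × Fin d) × ℝ)
        = (W, (0:ℝ)) + τ • ((0 : EuclideanSpace ℝ (Fin d × Fin d)), (1:ℝ)) := by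
      simp [Prod.ext_iff]
    rw [e1, e2, e3, map_add, _root_.map_smul]
    simp [smul_eq_mul]
    ring
  -- far-field lower bound for the relative free energy G
  have hGfar : ∃ CG : ℝ, 0 ≤ CG ∧
      ∀ (Fb : EuclideanSpace ℝ (Fin d × Fin d)) (θb : ℝ), ‖Fb‖ ≤ M → δ ≤ θb → θb ≤ M →
      ∀ (F : EuclideanSpace ℝ (Fin d × Fin d)) (θ : ℝ), 0 ≤ θ →
        c/2 * (‖F‖ ^ p + θ ^ q) - CG ≤
          (ψ F θ - ψ Fb θb - ⟪Sig Fb θb, F - Fb⟫ + η Fb θb * (θ - θb))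
            + (η F θ - η Fb θb) * (θ - θb) := by
    obtain ⟨Cb1, hCb1_0, hCb1⟩ := hηglob (c/(8*(M+1))) (by positivity)
    obtain ⟨CL1, hCL1_0, hCL1⟩ := linpow p CΓ (c/8) hp hCΓ0 (by positivity)
    refine ⟨c + CΓ + CΓ*M + CL1 + M*Cb1, by positivity, ?_⟩
    intro Fb θb hFb hθb1 hθb2 F θ hθ
    have h1 : (0:ℝ) ≤ ‖F‖ ^ p := Real.rpow_nonneg (norm_nonneg _) _
    have h2 : (0:ℝ) ≤ θ ^ q := Real.rpow_nonneg hθ _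
    have hP0' : (0:ℝ) ≤ ‖F‖ ^ p + θ ^ q := by linarith
    obtain ⟨hΓ1, hΓ2, hΓ3, hΓ4⟩ := hCΓ Fb θb hFb hθb1 hθb2
    have he := (ha1 F θ hθ).1
    have hηb := hCb1 F θ hθ
    have hθb0 : 0 ≤ θb := le_trans hδ.le hθb1
    have h5 : θb * η F θ ≤ M * |η F θ| := by
      have h5a : θb * η F θ ≤ θb * |η F θ| :=
        mul_le_mul_of_nonneg_left (le_abs_self _) hθb0
      have h5b : θb * |η F θ| ≤ M * |η F θ| :=
        mul_le_mul_of_nonneg_right hθb2 (abs_nonneg _)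
      linarith
    have h6 : M * |η F θ| ≤ M * (c/(8*(M+1)) * (‖F‖^p + θ^q)) + M * Cb1 := by
      have h6a := mul_le_mul_of_nonneg_left hηb hM.le
      linarith [(by ring : M * (c/(8*(M+1)) * (‖F‖^p + θ^q) + Cb1)
        = M * (c/(8*(M+1)) * (‖F‖^p + θ^q)) + M * Cb1)]
    have hcoef : M * (c/(8*(M+1))) ≤ c/8 := by
      have hkey : M * (c/(8*(M+1))) = c/8 * (M/(M+1)) := by
        field_simp
      have hfrac : M/(M+1) ≤ 1 := by
        rw [div_le_one (by linarith)]
        linarith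
      calc M * (c/(8*(M+1))) = c/8 * (M/(M+1)) := hkey
        _ ≤ c/8 * 1 := mul_le_mul_of_nonneg_left hfrac (by positivity)
        _ = c/8 := mul_one _
    have h7 : M * (c/(8*(M+1)) * (‖F‖^p + θ^q)) ≤ c/8 * (‖F‖^p + θ^q) := by
      have h7a := mul_le_mul_of_nonneg_right hcoef hP0'
      linarith [(by ring : M * (c/(8*(M+1)) * (‖F‖^p + θ^q))
        = M * (c/(8*(M+1))) * (‖F‖^p + θ^q))]
    have hinner : ⟪Sig Fb θb, F - Fb⟫ ≤ CΓ * ‖F‖ + CΓ * M := by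
      have hi := real_inner_le_norm (Sig Fb θb) (F - Fb)
      have hn : ‖F - Fb‖ ≤ ‖F‖ + M := le_trans (norm_sub_le _ _) (by linarith)
      have hi2 : ‖Sig Fb θb‖ * ‖F - Fb‖ ≤ CΓ * (‖F‖ + M) :=
        mul_le_mul hΓ2 hn (norm_nonneg _) hCΓ0
      linarith [(by ring : CΓ * (‖F‖ + M) = CΓ*‖F‖ + CΓ*M)]
    have hlin := hCL1 ‖F‖ (norm_nonneg _)
    have hψb : ψ Fb θb ≤ CΓ := le_trans (le_abs_self _) hΓ1
    have hiden : (ψ F θ - ψ Fb θb - ⟪Sig Fb θb, F - Fb⟫ + η Fb θb * (θ - θb))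
            + (η F θ - η Fb θb) * (θ - θb)
        = (ψ F θ + θ * η F θ) - θb * η F θ - ψ Fb θb - ⟪Sig Fb θb, F - Fb⟫ := by ring
    have hcP1 : 0 ≤ c * (‖F‖ ^ p) := mul_nonneg hc.le h1
    have hcP2 : 0 ≤ c * (θ ^ q) := mul_nonneg hc.le h2
    rw [hiden]
    linarith [(by ring : c * (‖F‖ ^ p + θ ^ q) = c * (‖F‖^p) + c * (θ^q)),
      (by ring : c/8 * (‖F‖ ^ p + θ ^ q) = c/8 * (‖F‖^p) + c/8 * (θ^q)),
      (by ring : c/2 * (‖F‖ ^ p + θ ^ q) = c/2 * (‖F‖^p) + c/2 * (θ^q))]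
  obtain ⟨CG, hCG0, hGfar⟩ := hGfar
  -- far-field upper bound for the relative entropy N
  have hNfar : ∃ CN : ℝ, 0 ≤ CN ∧
      ∀ (Fb : EuclideanSpace ℝ (Fin d × Fin d)) (θb : ℝ), ‖Fb‖ ≤ M → δ ≤ θb → θb ≤ M →
      ∀ (F : EuclideanSpace ℝ (Fin d × Fin d)) (θ : ℝ), 0 ≤ θ →
        |η F θ - η Fb θb - fderiv ℝ (fun F' => η F' θb) Fb (F - Fb)
            - deriv (fun s => η Fb s) θb * (θ - θb)| ≤
          c/8 * (‖F‖ ^ p + θ ^ q) + CN := by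
    obtain ⟨Cb2, hCb2_0, hCb2⟩ := hηglob (c/32) (by positivity)
    obtain ⟨CL2, hCL2_0, hCL2⟩ := linpow p CΓ (c/32) hp hCΓ0 (by positivity)
    obtain ⟨CL3, hCL3_0, hCL3⟩ := linpow q CΓ (c/32) hq hCΓ0 (by positivity)
    refine ⟨Cb2 + CΓ + CL2 + CL3 + 2*(CΓ*M), by positivity, ?_⟩
    intro Fb θb hFb hθb1 hθb2 F θ hθ
    have h1 : (0:ℝ) ≤ ‖F‖ ^ p := Real.rpow_nonneg (norm_nonneg _) _
    have h2 : (0:ℝ) ≤ θ ^ q := Real.rpow_nonneg hθ _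
    obtain ⟨hΓ1, hΓ2, hΓ3, hΓ4⟩ := hCΓ Fb θb hFb hθb1 hθb2
    have hθb0 : 0 ≤ θb := le_trans hδ.le hθb1
    have hpartFb := hpart Fb θb (lt_of_lt_of_le hδ hθb1) (F - Fb) (θ - θb)
    have htri : |η F θ - η Fb θb - fderiv ℝ (fun F' => η F' θb) Fb (F - Fb)
            - deriv (fun s => η Fb s) θb * (θ - θb)| ≤
        |η F θ| + |η Fb θb| + |fderiv ℝ (fun F' => η F' θb) Fb (F - Fb)
            + deriv (fun s => η Fb s) θb * (θ - θb)| := by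
      have e : η F θ - η Fb θb - fderiv ℝ (fun F' => η F' θb) Fb (F - Fb)
            - deriv (fun s => η Fb s) θb * (θ - θb)
          = (η F θ - η Fb θb) - (fderiv ℝ (fun F' => η F' θb) Fb (F - Fb)
            + deriv (fun s => η Fb s) θb * (θ - θb)) := by ring
      rw [e]
      have t1 := abs_sub (η F θ - η Fb θb) (fderiv ℝ (fun F' => η F' θb) Fb (F - Fb)
            + deriv (fun s => η Fb s) θb * (θ - θb))
      have t2 := abs_sub (η F θ) (η Fb θb)
      linarith
    have hz : |fderiv ℝ (fun F' => η F' θb) Fb (F - Fb)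
            + deriv (fun s => η Fb s) θb * (θ - θb)| ≤ CΓ * ‖F‖ + CΓ * θ + 2*(CΓ*M) := by
      rw [hpartFb]
      have hle := (fderiv ℝ (fun z : EuclideanSpace ℝ (Fin d × Fin d) × ℝ => η z.1 z.2)
        (Fb, θb)).le_opNorm ((F - Fb, θ - θb))
      have hw : ‖((F - Fb, θ - θb) : EuclideanSpace ℝ (Fin d × Fin d) × ℝ)‖
          ≤ ‖F‖ + θ + 2*M := by
        rw [Prod.norm_def]
        show max ‖F - Fb‖ ‖θ - θb‖ ≤ ‖F‖ + θ + 2*M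
        have a1 : ‖F - Fb‖ ≤ ‖F‖ + M := le_trans (norm_sub_le _ _) (by linarith)
        have a2 : ‖θ - θb‖ ≤ θ + M := by
          rw [Real.norm_eq_abs]
          rw [abs_le]
          constructor <;> [linarith; linarith]
        have hM0 : 0 ≤ M := hM.le
        have hF0 : 0 ≤ ‖F‖ := norm_nonneg F
        exact max_le (le_trans a1 (by linarith)) (le_trans a2 (by linarith))
      have hmul : ‖fderiv ℝ (fun z : EuclideanSpace ℝ (Fin d × Fin d) × ℝ => η z.1 z.2)
          (Fb, θb)‖ * ‖((F - Fb, θ - θb) : EuclideanSpace ℝ (Fin d × Fin d) × ℝ)‖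
          ≤ CΓ * (‖F‖ + θ + 2*M) := mul_le_mul hΓ4 hw (norm_nonneg _) hCΓ0
      calc |fderiv ℝ (fun z : EuclideanSpace ℝ (Fin d × Fin d) × ℝ => η z.1 z.2)
            (Fb, θb) (F - Fb, θ - θb)|
          = ‖fderiv ℝ (fun z : EuclideanSpace ℝ (Fin d × Fin d) × ℝ => η z.1 z.2)
            (Fb, θb) (F - Fb, θ - θb)‖ := (Real.norm_eq_abs _).symm
        _ ≤ CΓ * (‖F‖ + θ + 2*M) := le_trans hle hmul
        _ = CΓ * ‖F‖ + CΓ * θ + 2*(CΓ*M) := by ring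
    have hηb := hCb2 F θ hθ
    have hl2 := hCL2 ‖F‖ (norm_nonneg _)
    have hl3 := hCL3 θ hθ
    have hcP1 : 0 ≤ c * (‖F‖ ^ p) := mul_nonneg hc.le h1
    have hcP2 : 0 ≤ c * (θ ^ q) := mul_nonneg hc.le h2
    linarith [(by ring : c/32 * (‖F‖ ^ p + θ ^ q) = c/32 * (‖F‖^p) + c/32 * (θ^q)),
      (by ring : c/8 * (‖F‖ ^ p + θ ^ q) = c/8 * (‖F‖^p) + c/8 * (θ^q))]
  obtain ⟨CN, hCN0, hNfar⟩ := hNfar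
  -- choice of the radius and the compact box
  set R : ℝ := max 1 (max (4*CG/c) (8*CN/c)) with hR
  clear_value R
  have hR1 : (1:ℝ) ≤ R := by rw [hR]; exact le_max_left _ _
  obtain ⟨K', hMK', hRK'⟩ : ∃ K' : ℝ, M ≤ K' ∧ max 1 R ≤ K' :=
    ⟨max M (max 1 R), le_max_left _ _, le_max_right _ _⟩
  -- quadratic lower bound for the elastic part on the box
  have hAq : ∃ m₁ : ℝ, 0 < m₁ ∧
      ∀ (Fb : EuclideanSpace ℝ (Fin d × Fin d)) (θb : ℝ), ‖Fb‖ ≤ M → δ ≤ θb → θb ≤ M →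
      ∀ (F : EuclideanSpace ℝ (Fin d × Fin d)), ‖F‖ ≤ K' →
        m₁/2 * ‖F - Fb‖^2 ≤ ψ F θb - ψ Fb θb - ⟪Sig Fb θb, F - Fb⟫ := by
    rcases subsingleton_or_nontrivial (EuclideanSpace ℝ (Fin d × Fin d)) with hsub | hnt
    · refine ⟨1, one_pos, ?_⟩
      intro Fb θb hFb hθb1 hθb2 F hFK
      have hFeq : F = Fb := Subsingleton.elim _ _
      subst hFeq
      simp
    rcases lt_or_ge M δ with hδM | hδM
    · exact ⟨1, one_pos, fun Fb θb hFb hθb1 hθb2 F hFK =>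
        absurd (le_trans hθb1 hθb2) (by linarith)⟩
    -- nondegenerate case
    have hnh : ∀ z : EuclideanSpace ℝ (Fin d × Fin d) × ℝ, 0 < z.2 →
        (Set.univ : Set (EuclideanSpace ℝ (Fin d × Fin d))) ×ˢ Set.Ici (0:ℝ) ∈ nhds z := by
      intro z hz
      have h0 : Set.Ici (0:ℝ) ∈ nhds z.2 := Ici_mem_nhds hz
      have h' := prod_mem_nhds (Filter.univ_mem (f := nhds z.1)) h0
      simpa using h'
    have hψd1 : ∀ z : EuclideanSpace ℝ (Fin d × Fin d) × ℝ, 0 < z.2 →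
        HasFDerivAt (fun z : EuclideanSpace ℝ (Fin d × Fin d) × ℝ => ψ z.1 z.2)
          (fderiv ℝ (fun z : EuclideanSpace ℝ (Fin d × Fin d) × ℝ => ψ z.1 z.2) z) z :=
      fun z hz => ((hψreg.contDiffAt (hnh z hz)).differentiableAt (by norm_num)).hasFDerivAt
    have hψd2 : ∀ z : EuclideanSpace ℝ (Fin d × Fin d) × ℝ, 0 < z.2 →
        HasFDerivAt (fderiv ℝ (fun z : EuclideanSpace ℝ (Fin d × Fin d) × ℝ => ψ z.1 z.2))
          (fderiv ℝ (fderiv ℝ (fun z : EuclideanSpace ℝ (Fin d × Fin d) × ℝ => ψ z.1 z.2)) z)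
          z :=
      fun z hz => (((hψreg.contDiffAt (hnh z hz)).fderiv_right (m := 2)
        (by norm_num)).differentiableAt (by norm_num)).hasFDerivAt
    -- the F-slice first derivative, applied
    have hslice_app : ∀ (F1 : EuclideanSpace ℝ (Fin d × Fin d)) (θ0 : ℝ), 0 < θ0 →
        ∀ V : EuclideanSpace ℝ (Fin d × Fin d),
        fderiv ℝ (fun F' => ψ F' θ0) F1 V
          = fderiv ℝ (fun z : EuclideanSpace ℝ (Fin d × Fin d) × ℝ => ψ z.1 z.2) (F1, θ0)
            (V, 0) := by
      intro F1 θ0 hθ0 V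
      have hcomp : HasFDerivAt (fun F' => ψ F' θ0)
          ((fderiv ℝ (fun z : EuclideanSpace ℝ (Fin d × Fin d) × ℝ => ψ z.1 z.2)
            (F1, θ0)).comp (ContinuousLinearMap.inl ℝ (EuclideanSpace ℝ (Fin d × Fin d)) ℝ))
          F1 :=
        HasFDerivAt.comp F1 (f := fun e : EuclideanSpace ℝ (Fin d × Fin d) => (e, θ0)) (hψd1 (F1, θ0) hθ0) (hasFDerivAt_prodMk_left (𝕜 := ℝ) F1 θ0)
      rw [hcomp.fderiv]
      simp
    -- the F-slice second derivative
    have hiter : ∀ (F0 : EuclideanSpace ℝ (Fin d × Fin d)) (θ0 : ℝ), 0 < θ0 →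
        ∀ V : EuclideanSpace ℝ (Fin d × Fin d),
        iteratedFDeriv ℝ 2 (fun F' => ψ F' θ0) F0 ![V, V]
          = fderiv ℝ (fderiv ℝ (fun z : EuclideanSpace ℝ (Fin d × Fin d) × ℝ => ψ z.1 z.2))
              (F0, θ0) (V, 0) (V, 0) := by
      intro F0 θ0 hθ0 V
      set κ : ((EuclideanSpace ℝ (Fin d × Fin d) × ℝ) →L[ℝ] ℝ)
          →L[ℝ] (EuclideanSpace ℝ (Fin d × Fin d) →L[ℝ] ℝ) :=
        (ContinuousLinearMap.compL ℝ (EuclideanSpace ℝ (Fin d × Fin d))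
          (EuclideanSpace ℝ (Fin d × Fin d) × ℝ) ℝ).flip
          (ContinuousLinearMap.inl ℝ (EuclideanSpace ℝ (Fin d × Fin d)) ℝ) with hκ
      have hsl : ∀ F1 : EuclideanSpace ℝ (Fin d × Fin d),
          fderiv ℝ (fun F' => ψ F' θ0) F1
            = κ (fderiv ℝ (fun z : EuclideanSpace ℝ (Fin d × Fin d) × ℝ => ψ z.1 z.2)
                (F1, θ0)) := by
        intro F1
        have hcomp : HasFDerivAt (fun F' => ψ F' θ0)
            ((fderiv ℝ (fun z : EuclideanSpace ℝ (Fin d × Fin d) × ℝ => ψ z.1 z.2)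
              (F1, θ0)).comp (ContinuousLinearMap.inl ℝ (EuclideanSpace ℝ (Fin d × Fin d)) ℝ))
            F1 :=
          HasFDerivAt.comp F1 (f := fun e : EuclideanSpace ℝ (Fin d × Fin d) => (e, θ0)) (hψd1 (F1, θ0) hθ0) (hasFDerivAt_prodMk_left (𝕜 := ℝ) F1 θ0)
        rw [hcomp.fderiv, hκ]
        simp [ContinuousLinearMap.flip_apply, ContinuousLinearMap.compL_apply]
      have hfun : fderiv ℝ (fun F' => ψ F' θ0)
          = fun F1 => κ (fderiv ℝ (fun z : EuclideanSpace ℝ (Fin d × Fin d) × ℝ => ψ z.1 z.2)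
              (F1, θ0)) := funext hsl
      have hinner : HasFDerivAt
          (fun F1 : EuclideanSpace ℝ (Fin d × Fin d) =>
            fderiv ℝ (fun z : EuclideanSpace ℝ (Fin d × Fin d) × ℝ => ψ z.1 z.2) (F1, θ0))
          ((fderiv ℝ (fderiv ℝ (fun z : EuclideanSpace ℝ (Fin d × Fin d) × ℝ => ψ z.1 z.2))
            (F0, θ0)).comp (ContinuousLinearMap.inl ℝ (EuclideanSpace ℝ (Fin d × Fin d)) ℝ))
          F0 :=
        HasFDerivAt.comp F0 (hψd2 (F0, θ0) hθ0) (hasFDerivAt_prodMk_left (𝕜 := ℝ) F0 θ0)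
      have houter : HasFDerivAt
          (fun F1 : EuclideanSpace ℝ (Fin d × Fin d) =>
            κ (fderiv ℝ (fun z : EuclideanSpace ℝ (Fin d × Fin d) × ℝ => ψ z.1 z.2) (F1, θ0)))
          (κ.comp ((fderiv ℝ (fderiv ℝ
              (fun z : EuclideanSpace ℝ (Fin d × Fin d) × ℝ => ψ z.1 z.2)) (F0, θ0)).comp
            (ContinuousLinearMap.inl ℝ (EuclideanSpace ℝ (Fin d × Fin d)) ℝ))) F0 :=
        κ.hasFDerivAt.comp F0 hinner
      rw [iteratedFDeriv_two_apply, hfun, houter.fderiv, hκ]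
      simp [ContinuousLinearMap.comp_apply, ContinuousLinearMap.flip_apply,
        ContinuousLinearMap.compL_apply, ContinuousLinearMap.inl_apply]
    -- the compact set of base points and directions
    obtain ⟨V0, hV0⟩ : (Metric.sphere (0 : EuclideanSpace ℝ (Fin d × Fin d)) 1).Nonempty :=
      NormedSpace.sphere_nonempty.mpr zero_le_one
    have hK'0 : (0:ℝ) ≤ K' := le_trans hM.le hMK'
    have hTcpt : IsCompact (((Metric.closedBall (0 : EuclideanSpace ℝ (Fin d × Fin d)) K')
        ×ˢ Set.Icc δ M) ×ˢ Metric.sphere (0 : EuclideanSpace ℝ (Fin d × Fin d)) 1) :=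
      ((isCompact_closedBall _ _).prod isCompact_Icc).prod (isCompact_sphere _ _)
    have hTne : (((Metric.closedBall (0 : EuclideanSpace ℝ (Fin d × Fin d)) K')
        ×ˢ Set.Icc δ M) ×ˢ Metric.sphere (0 : EuclideanSpace ℝ (Fin d × Fin d)) 1).Nonempty :=
      ⟨((0, δ), V0), ⟨⟨mem_closedBall_zero_iff.mpr (by simpa using hK'0), le_refl δ, hδM⟩, hV0⟩⟩
    have hTφcont : ContinuousOn
        (fun w : (EuclideanSpace ℝ (Fin d × Fin d) × ℝ) × EuclideanSpace ℝ (Fin d × Fin d) =>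
          fderiv ℝ (fderiv ℝ (fun z : EuclideanSpace ℝ (Fin d × Fin d) × ℝ => ψ z.1 z.2)) w.1
            (w.2, 0) (w.2, 0))
        (((Metric.closedBall (0 : EuclideanSpace ℝ (Fin d × Fin d)) K')
        ×ˢ Set.Icc δ M) ×ˢ Metric.sphere (0 : EuclideanSpace ℝ (Fin d × Fin d)) 1) := by
      intro w hw
      have hz2 : 0 < w.1.2 := lt_of_lt_of_le hδ hw.1.2.1
      have hc1 : ContinuousAt
          (fun w : (EuclideanSpace ℝ (Fin d × Fin d) × ℝ) × EuclideanSpace ℝ (Fin d × Fin d) =>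
            fderiv ℝ (fderiv ℝ (fun z : EuclideanSpace ℝ (Fin d × Fin d) × ℝ => ψ z.1 z.2)) w.1)
          w := by
        have hcd : ContinuousAt
            (fderiv ℝ (fderiv ℝ (fun z : EuclideanSpace ℝ (Fin d × Fin d) × ℝ => ψ z.1 z.2)))
            w.1 :=
          ((((hψreg.contDiffAt (hnh w.1 hz2)).fderiv_right (m := 2)
            (by norm_num)).fderiv_right (m := 1) (by norm_num))).continuousAt
        exact hcd.comp continuousAt_fst
      have hc2 : ContinuousAt
          (fun w : (EuclideanSpace ℝ (Fin d × Fin d) × ℝ) × EuclideanSpace ℝ (Fin d × Fin d) =>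
            ((w.2, (0:ℝ)) : EuclideanSpace ℝ (Fin d × Fin d) × ℝ)) w :=
        (continuous_snd.prodMk continuous_const).continuousAt
      have happ1 : ContinuousAt
          (fun w : (EuclideanSpace ℝ (Fin d × Fin d) × ℝ) × EuclideanSpace ℝ (Fin d × Fin d) =>
            fderiv ℝ (fderiv ℝ (fun z : EuclideanSpace ℝ (Fin d × Fin d) × ℝ => ψ z.1 z.2)) w.1
              (w.2, 0)) w :=
        hc1.clm_apply hc2
      have happ2 : ContinuousAt
          (fun w : (EuclideanSpace ℝ (Fin d × Fin d) × ℝ) × EuclideanSpace ℝ (Fin d × Fin d) =>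
            fderiv ℝ (fderiv ℝ (fun z : EuclideanSpace ℝ (Fin d × Fin d) × ℝ => ψ z.1 z.2)) w.1
              (w.2, 0) (w.2, 0)) w :=
        happ1.clm_apply hc2
      exact happ2.continuousWithinAt
    obtain ⟨wmin, hwminT, hwmin⟩ := hTcpt.exists_isMinOn hTne hTφcont
    have hwpos : (0:ℝ) < wmin.1.2 := lt_of_lt_of_le hδ hwminT.1.2.1
    have hwsph : ‖wmin.2‖ = 1 := mem_sphere_zero_iff_norm.mp hwminT.2
    have hwne : wmin.2 ≠ 0 := by
      intro h0
      rw [h0, norm_zero] at hwsph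
      exact one_ne_zero hwsph.symm
    have hm₁pos : 0 < fderiv ℝ
        (fderiv ℝ (fun z : EuclideanSpace ℝ (Fin d × Fin d) × ℝ => ψ z.1 z.2)) wmin.1
        (wmin.2, 0) (wmin.2, 0) := by
      have hpos := hGibbsF wmin.1.1 wmin.1.2 hwpos.le wmin.2 hwne
      rw [hiter wmin.1.1 wmin.1.2 hwpos wmin.2] at hpos
      exact hpos
    -- uniform quadratic lower bound
    have hquad : ∀ (F0 : EuclideanSpace ℝ (Fin d × Fin d)) (θ0 : ℝ),
        ‖F0‖ ≤ K' → δ ≤ θ0 → θ0 ≤ M → ∀ V : EuclideanSpace ℝ (Fin d × Fin d),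
        fderiv ℝ (fderiv ℝ (fun z : EuclideanSpace ℝ (Fin d × Fin d) × ℝ => ψ z.1 z.2)) wmin.1
            (wmin.2, 0) (wmin.2, 0) * ‖V‖^2
          ≤ fderiv ℝ (fderiv ℝ (fun z : EuclideanSpace ℝ (Fin d × Fin d) × ℝ => ψ z.1 z.2))
              (F0, θ0) (V, 0) (V, 0) := by
      intro F0 θ0 hF0 h1 h2 V
      rcases eq_or_ne V 0 with rfl | hV
      · have h0 : ((0 : EuclideanSpace ℝ (Fin d × Fin d)), (0:ℝ))
            = (0 : EuclideanSpace ℝ (Fin d × Fin d) × ℝ) := rfl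
        rw [h0]
        simp
      · have hVn : ‖V‖ ≠ 0 := norm_ne_zero_iff.mpr hV
        have hVhat : (‖V‖⁻¹ • V) ∈ Metric.sphere (0 : EuclideanSpace ℝ (Fin d × Fin d)) 1 :=
          mem_sphere_zero_iff_norm.mpr (norm_smul_inv_norm hV)
        have hmem : (((F0, θ0), ‖V‖⁻¹ • V) :
            (EuclideanSpace ℝ (Fin d × Fin d) × ℝ) × EuclideanSpace ℝ (Fin d × Fin d)) ∈
            ((Metric.closedBall (0 : EuclideanSpace ℝ (Fin d × Fin d)) K')
            ×ˢ Set.Icc δ M) ×ˢ Metric.sphere (0 : EuclideanSpace ℝ (Fin d × Fin d)) 1 :=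
          ⟨⟨mem_closedBall_zero_iff.mpr hF0, h1, h2⟩, hVhat⟩
        have hge := hwmin hmem
        simp only [Set.mem_setOf_eq] at hge
        have hsm : ((V, (0:ℝ)) : EuclideanSpace ℝ (Fin d × Fin d) × ℝ)
            = ‖V‖ • ((‖V‖⁻¹ • V, (0:ℝ)) : EuclideanSpace ℝ (Fin d × Fin d) × ℝ) := by
          rw [Prod.smul_mk, smul_smul, mul_inv_cancel₀ hVn, one_smul, smul_zero]
        have hexp : fderiv ℝ (fderiv ℝ
              (fun z : EuclideanSpace ℝ (Fin d × Fin d) × ℝ => ψ z.1 z.2)) (F0, θ0)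
              (V, 0) (V, 0)
            = ‖V‖ * (‖V‖ * (fderiv ℝ (fderiv ℝ
              (fun z : EuclideanSpace ℝ (Fin d × Fin d) × ℝ => ψ z.1 z.2)) (F0, θ0)
              (‖V‖⁻¹ • V, 0) (‖V‖⁻¹ • V, 0))) := by
          rw [hsm]
          simp only [ContinuousLinearMap.map_smul, ContinuousLinearMap.smul_apply,
            smul_eq_mul]
        rw [hexp]
        have hVnn : (0:ℝ) ≤ ‖V‖ := norm_nonneg V
        nlinarith [hge, sq_nonneg ‖V‖]
    refine ⟨_, hm₁pos, ?_⟩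
    intro Fb θb hFb hθb1 hθb2 F hFK
    rcases eq_or_ne F Fb with rfl | hne
    · simp
    have hθbpos : (0:ℝ) < θb := lt_of_lt_of_le hδ hθb1
    -- the line through Fb in direction F - Fb
    have hcur : ∀ t : ℝ, HasDerivAt
        (fun t' : ℝ => ((Fb + t' • (F - Fb), θb) : EuclideanSpace ℝ (Fin d × Fin d) × ℝ))
        ((F - Fb, 0) : EuclideanSpace ℝ (Fin d × Fin d) × ℝ) t := by
      intro t
      have h1 : HasDerivAt (fun t' : ℝ => Fb + t' • (F - Fb)) (F - Fb) t := by
        simpa using ((hasDerivAt_id' t).smul_const (F - Fb)).const_add Fb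
      exact HasDerivAt.prodMk h1 (hasDerivAt_const t θb)
    have huσ : ∀ t : ℝ, HasDerivAt (fun t' : ℝ => ψ (Fb + t' • (F - Fb)) θb)
        (fderiv ℝ (fun z : EuclideanSpace ℝ (Fin d × Fin d) × ℝ => ψ z.1 z.2)
          (Fb + t • (F - Fb), θb) (F - Fb, 0)) t :=
      fun t => (hψd1 _ hθbpos).comp_hasDerivAt t (hcur t)
    have huσ2 : ∀ t : ℝ, HasDerivAt
        (fun t' : ℝ => fderiv ℝ (fun z : EuclideanSpace ℝ (Fin d × Fin d) × ℝ => ψ z.1 z.2)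
          (Fb + t' • (F - Fb), θb) (F - Fb, 0))
        (fderiv ℝ (fderiv ℝ (fun z : EuclideanSpace ℝ (Fin d × Fin d) × ℝ => ψ z.1 z.2))
          (Fb + t • (F - Fb), θb) (F - Fb, 0) (F - Fb, 0)) t := by
      intro t
      have hD : HasDerivAt
          (fun t' : ℝ => fderiv ℝ (fun z : EuclideanSpace ℝ (Fin d × Fin d) × ℝ => ψ z.1 z.2)
            (Fb + t' • (F - Fb), θb))
          (fderiv ℝ (fderiv ℝ (fun z : EuclideanSpace ℝ (Fin d × Fin d) × ℝ => ψ z.1 z.2))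
            (Fb + t • (F - Fb), θb) (F - Fb, 0)) t :=
        (hψd2 _ hθbpos).comp_hasDerivAt t (hcur t)
      have := hD.clm_apply (hasDerivAt_const t
        (((F - Fb, 0)) : EuclideanSpace ℝ (Fin d × Fin d) × ℝ))
      simpa using this
    have hseg : ∀ t : ℝ, 0 ≤ t → t ≤ 1 → ‖Fb + t • (F - Fb)‖ ≤ K' := by
      intro t ht0 ht1
      have he : Fb + t • (F - Fb) = (1 - t) • Fb + t • F := by
        rw [sub_smul, one_smul, smul_sub]
        abel
      rw [he]
      have hMK'' : ‖Fb‖ ≤ K' := le_trans hFb hMK'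
      calc ‖(1-t) • Fb + t • F‖ ≤ ‖(1-t) • Fb‖ + ‖t • F‖ := norm_add_le _ _
        _ = (1-t) * ‖Fb‖ + t * ‖F‖ := by
            rw [norm_smul, norm_smul, Real.norm_eq_abs, Real.norm_eq_abs,
              abs_of_nonneg (by linarith : (0:ℝ) ≤ 1 - t), abs_of_nonneg ht0]
        _ ≤ (1-t) * K' + t * K' := by
            have h1t : (0:ℝ) ≤ 1 - t := by linarith
            nlinarith [norm_nonneg Fb, norm_nonneg F]
        _ = K' := by ring
    have hlow : ∀ t : ℝ, 0 ≤ t → t ≤ 1 →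
        fderiv ℝ (fderiv ℝ (fun z : EuclideanSpace ℝ (Fin d × Fin d) × ℝ => ψ z.1 z.2)) wmin.1
            (wmin.2, 0) (wmin.2, 0) * ‖F - Fb‖^2
          ≤ fderiv ℝ (fderiv ℝ (fun z : EuclideanSpace ℝ (Fin d × Fin d) × ℝ => ψ z.1 z.2))
            (Fb + t • (F - Fb), θb) (F - Fb, 0) (F - Fb, 0) :=
      fun t ht0 ht1 => hquad _ θb (hseg t ht0 ht1) hθb1 hθb2 (F - Fb)
    -- abbreviations
    set m₁ : ℝ := fderiv ℝ
        (fderiv ℝ (fun z : EuclideanSpace ℝ (Fin d × Fin d) × ℝ => ψ z.1 z.2)) wmin.1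
        (wmin.2, 0) (wmin.2, 0) with hm₁def
    set c0 : ℝ := fderiv ℝ (fun z : EuclideanSpace ℝ (Fin d × Fin d) × ℝ => ψ z.1 z.2)
        (Fb, θb) (F - Fb, 0) with hc0def
    set r1 : ℝ → ℝ := fun t =>
      fderiv ℝ (fun z : EuclideanSpace ℝ (Fin d × Fin d) × ℝ => ψ z.1 z.2)
        (Fb + t • (F - Fb), θb) (F - Fb, 0) - c0 - m₁ * ‖F - Fb‖^2 * t with hr1def
    have hr1d : ∀ t : ℝ, HasDerivAt r1
        (fderiv ℝ (fderiv ℝ (fun z : EuclideanSpace ℝ (Fin d × Fin d) × ℝ => ψ z.1 z.2))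
          (Fb + t • (F - Fb), θb) (F - Fb, 0) (F - Fb, 0) - m₁ * ‖F - Fb‖^2) t := by
      intro t
      have hlin : HasDerivAt (fun t' : ℝ => m₁ * ‖F - Fb‖^2 * t') (m₁ * ‖F - Fb‖^2) t := by
        simpa using (hasDerivAt_id' t).const_mul (m₁ * ‖F - Fb‖^2)
      exact ((huσ2 t).sub_const c0).sub hlin
    have hr1zero : r1 0 = 0 := by
      rw [hr1def]
      simp [hc0def]
    have hr1mono : MonotoneOn r1 (Set.Icc (0:ℝ) 1) := by
      apply monotoneOn_of_deriv_nonneg (convex_Icc 0 1)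
      · exact fun t _ => (hr1d t).continuousAt.continuousWithinAt
      · exact fun t _ => (hr1d t).differentiableAt.differentiableWithinAt
      · intro t ht
        rw [interior_Icc] at ht
        rw [(hr1d t).deriv]
        have := hlow t ht.1.le ht.2.le
        linarith
    have hr1nonneg : ∀ t : ℝ, 0 ≤ t → t ≤ 1 → 0 ≤ r1 t := by
      intro t ht0 ht1
      have := hr1mono (Set.left_mem_Icc.mpr zero_le_one) ⟨ht0, ht1⟩ ht0
      rw [hr1zero] at this
      exact this
    set r : ℝ → ℝ := fun t => ψ (Fb + t • (F - Fb)) θb - ψ Fb θb - c0 * t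
      - m₁ * ‖F - Fb‖^2/2 * t^2 with hrdef
    have hrd : ∀ t : ℝ, HasDerivAt r (r1 t) t := by
      intro t
      have h2 : HasDerivAt (fun t' : ℝ => c0 * t') c0 t := by
        simpa using (hasDerivAt_id' t).const_mul c0
      have h3 : HasDerivAt (fun t' : ℝ => m₁ * ‖F - Fb‖^2/2 * t'^2)
          (m₁ * ‖F - Fb‖^2/2 * ((2:ℕ) * t^(2-1) * 1)) t :=
        ((hasDerivAt_id' t).pow 2).const_mul (m₁ * ‖F - Fb‖^2/2)
      have := (((huσ t).sub_const (ψ Fb θb)).sub h2).sub h3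
      refine this.congr_deriv ?_
      rw [hr1def]
      push_cast
      ring
    have hrmono : MonotoneOn r (Set.Icc (0:ℝ) 1) := by
      apply monotoneOn_of_deriv_nonneg (convex_Icc 0 1)
      · exact fun t _ => (hrd t).continuousAt.continuousWithinAt
      · exact fun t _ => (hrd t).differentiableAt.differentiableWithinAt
      · intro t ht
        rw [interior_Icc] at ht
        rw [(hrd t).deriv]
        exact hr1nonneg t ht.1.le ht.2.le
    have hfinal := hrmono (Set.left_mem_Icc.mpr zero_le_one)
      (Set.right_mem_Icc.mpr zero_le_one) zero_le_one
    have hr0 : r 0 = 0 := by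
      rw [hrdef]
      simp
    have hr1' : r 1 = ψ F θb - ψ Fb θb - c0 - m₁ * ‖F - Fb‖^2/2 := by
      rw [hrdef]
      simp [add_sub_cancel]
    rw [hr0, hr1'] at hfinal
    have hc0inner : c0 = ⟪Sig Fb θb, F - Fb⟫ := by
      rw [hc0def, hconstSig Fb θb hθbpos.le (F - Fb),
        hslice_app Fb θb hθbpos (F - Fb)]
    rw [hc0inner] at hfinal
    linarith
  obtain ⟨m₁, hm₁, hAq⟩ := hAq
  -- quadratic lower bound for the thermal part on the box
  have hBq : ∃ m₂ : ℝ, 0 < m₂ ∧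
      ∀ (F : EuclideanSpace ℝ (Fin d × Fin d)) (θb : ℝ), ‖F‖ ≤ K' → δ ≤ θb → θb ≤ M →
      ∀ θ : ℝ, 0 ≤ θ → θ ≤ K' →
        m₂/2 * (θ - θb)^2 ≤ ψ F θ - ψ F θb + η F θ * (θ - θb) := by
    have hSuniq : UniqueDiffOn ℝ
        ((Set.univ : Set (EuclideanSpace ℝ (Fin d × Fin d))) ×ˢ Set.Ici (0:ℝ)) :=
      uniqueDiffOn_univ.prod (uniqueDiffOn_Ici 0)
    have hD1cont : ContinuousOn
        (fderivWithin ℝ (fun z : EuclideanSpace ℝ (Fin d × Fin d) × ℝ => η z.1 z.2)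
          ((Set.univ : Set (EuclideanSpace ℝ (Fin d × Fin d))) ×ˢ Set.Ici (0:ℝ)))
        ((Set.univ : Set (EuclideanSpace ℝ (Fin d × Fin d))) ×ˢ Set.Ici (0:ℝ)) :=
      (hηreg.fderivWithin hSuniq (m := 1) (by norm_num)).continuousOn
    have hQsub : (Metric.closedBall (0 : EuclideanSpace ℝ (Fin d × Fin d)) K') ×ˢ Set.Icc (0:ℝ) K'
        ⊆ (Set.univ : Set (EuclideanSpace ℝ (Fin d × Fin d))) ×ˢ Set.Ici (0:ℝ) := by
      rintro ⟨z1, z2⟩ hz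
      exact ⟨Set.mem_univ _, hz.2.1⟩
    have hQcpt : IsCompact ((Metric.closedBall (0 : EuclideanSpace ℝ (Fin d × Fin d)) K')
        ×ˢ Set.Icc (0:ℝ) K') := (isCompact_closedBall _ _).prod isCompact_Icc
    have hK'0 : 0 ≤ K' := le_trans hM.le hMK'
    have hQne : ((Metric.closedBall (0 : EuclideanSpace ℝ (Fin d × Fin d)) K')
        ×ˢ Set.Icc (0:ℝ) K').Nonempty :=
      ⟨(0, 0), by simp [hK'0]⟩
    have hφcont : ContinuousOn (fun z : EuclideanSpace ℝ (Fin d × Fin d) × ℝ =>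
        fderivWithin ℝ (fun z : EuclideanSpace ℝ (Fin d × Fin d) × ℝ => η z.1 z.2)
          ((Set.univ : Set (EuclideanSpace ℝ (Fin d × Fin d))) ×ˢ Set.Ici (0:ℝ)) z
          ((0 : EuclideanSpace ℝ (Fin d × Fin d)), (1:ℝ)))
        ((Metric.closedBall (0 : EuclideanSpace ℝ (Fin d × Fin d)) K') ×ˢ Set.Icc (0:ℝ) K') :=
      (hD1cont.mono hQsub).clm_apply continuousOn_const
    obtain ⟨zmin, hzminQ, hzmin⟩ := hQcpt.exists_isMinOn hQne hφcont
    -- the within-derivative realizes the derivative of the θ-slice within Ici 0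
    have hwithin_slice : ∀ z : EuclideanSpace ℝ (Fin d × Fin d) × ℝ, (0:ℝ) ≤ z.2 →
        HasDerivWithinAt (fun s => η z.1 s)
          (fderivWithin ℝ (fun z : EuclideanSpace ℝ (Fin d × Fin d) × ℝ => η z.1 z.2)
            ((Set.univ : Set (EuclideanSpace ℝ (Fin d × Fin d))) ×ˢ Set.Ici (0:ℝ)) z
            ((0 : EuclideanSpace ℝ (Fin d × Fin d)), (1:ℝ)))
          (Set.Ici 0) z.2 := by
      intro z hz
      have hzS : z ∈ (Set.univ : Set (EuclideanSpace ℝ (Fin d × Fin d))) ×ˢ Set.Ici (0:ℝ) :=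
        ⟨Set.mem_univ _, hz⟩
      have hdw := ((hηreg.differentiableOn (by norm_num)) z hzS).hasFDerivWithinAt
      have hcurve : HasDerivWithinAt
          (fun s => ((z.1, s) : EuclideanSpace ℝ (Fin d × Fin d) × ℝ))
          ((0 : EuclideanSpace ℝ (Fin d × Fin d)), (1:ℝ)) (Set.Ici 0) z.2 :=
        (HasDerivAt.prodMk (hasDerivAt_const z.2 z.1) (hasDerivAt_id z.2)).hasDerivWithinAt
      have hmaps : Set.MapsTo (fun s => ((z.1, s) : EuclideanSpace ℝ (Fin d × Fin d) × ℝ))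
          (Set.Ici 0) ((Set.univ : Set (EuclideanSpace ℝ (Fin d × Fin d))) ×ˢ Set.Ici (0:ℝ)) :=
        fun s hs => ⟨Set.mem_univ _, hs⟩
      exact hdw.comp_hasDerivWithinAt z.2 hcurve hmaps
    -- positivity of the minimum
    have hzmin2 : (0:ℝ) ≤ zmin.2 := (hQsub hzminQ).2
    have hposmin : 0 < fderivWithin ℝ (fun z : EuclideanSpace ℝ (Fin d × Fin d) × ℝ => η z.1 z.2)
        ((Set.univ : Set (EuclideanSpace ℝ (Fin d × Fin d))) ×ˢ Set.Ici (0:ℝ)) zmin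
        ((0 : EuclideanSpace ℝ (Fin d × Fin d)), (1:ℝ)) := by
      have hg := hGibbsθ zmin.1 zmin.2 hzmin2
      have hdiff : DifferentiableAt ℝ (fun s => η zmin.1 s) zmin.2 := by
        by_contra h
        rw [deriv_zero_of_not_differentiableAt h] at hg
        exact lt_irrefl 0 hg
      have h1 : HasDerivWithinAt (fun s => η zmin.1 s)
          (deriv (fun s => η zmin.1 s) zmin.2) (Set.Ici 0) zmin.2 :=
        hdiff.hasDerivAt.hasDerivWithinAt
      have h2 := hwithin_slice zmin hzmin2
      have hu : UniqueDiffWithinAt ℝ (Set.Ici (0:ℝ)) zmin.2 := uniqueDiffOn_Ici 0 zmin.2 hzmin2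
      have e1 := h1.derivWithin hu
      have e2 := h2.derivWithin hu
      rw [← e1, e2] at hg
      exact hg
    refine ⟨_, hposmin, ?_⟩
    intro F θb hF hθb1 hθb2 θ hθ0 hθK
    have hθb0 : (0:ℝ) < θb := lt_of_lt_of_le hδ hθb1
    have hθbK : θb ≤ K' := le_trans hθb2 hMK'
    -- derivative facts at interior points
    have hdη : ∀ s : ℝ, 0 < s → s ≤ K' →
        HasDerivAt (fun s' => η F s') (deriv (fun s' => η F s') s) s ∧
        fderivWithin ℝ (fun z : EuclideanSpace ℝ (Fin d × Fin d) × ℝ => η z.1 z.2)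
          ((Set.univ : Set (EuclideanSpace ℝ (Fin d × Fin d))) ×ˢ Set.Ici (0:ℝ)) zmin
          ((0 : EuclideanSpace ℝ (Fin d × Fin d)), (1:ℝ)) ≤ deriv (fun s' => η F s') s := by
      intro s hs hsK
      have hmem : ((F, s) : EuclideanSpace ℝ (Fin d × Fin d) × ℝ) ∈
          (Metric.closedBall (0 : EuclideanSpace ℝ (Fin d × Fin d)) K') ×ˢ Set.Icc (0:ℝ) K' :=
        ⟨mem_closedBall_zero_iff.mpr hF, hs.le, hsK⟩
      have hnhds : (Set.univ : Set (EuclideanSpace ℝ (Fin d × Fin d))) ×ˢ Set.Ici (0:ℝ)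
          ∈ nhds ((F, s) : EuclideanSpace ℝ (Fin d × Fin d) × ℝ) := by
        have h0 : Set.Ici (0:ℝ) ∈ nhds s := Ici_mem_nhds hs
        have h' := prod_mem_nhds (Filter.univ_mem (f := nhds F)) h0
        simpa using h'
      have hdiff : DifferentiableAt ℝ
          (fun z : EuclideanSpace ℝ (Fin d × Fin d) × ℝ => η z.1 z.2) (F, s) :=
        (hηreg.contDiffAt hnhds).differentiableAt (by norm_num)
      have hda : HasDerivAt (fun s' => η F s')
          (fderiv ℝ (fun z : EuclideanSpace ℝ (Fin d × Fin d) × ℝ => η z.1 z.2) (F, s)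
            ((0 : EuclideanSpace ℝ (Fin d × Fin d)), (1:ℝ))) s :=
        hdiff.hasFDerivAt.comp_hasDerivAt s (HasDerivAt.prodMk (hasDerivAt_const s F) (hasDerivAt_id s))
      have heq : fderivWithin ℝ (fun z : EuclideanSpace ℝ (Fin d × Fin d) × ℝ => η z.1 z.2)
          ((Set.univ : Set (EuclideanSpace ℝ (Fin d × Fin d))) ×ˢ Set.Ici (0:ℝ)) (F, s)
          = fderiv ℝ (fun z : EuclideanSpace ℝ (Fin d × Fin d) × ℝ => η z.1 z.2) (F, s) :=
        fderivWithin_of_mem_nhds hnhds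
      have hge := hzmin hmem
      simp only [Set.mem_setOf_eq] at hge
      rw [heq] at hge
      constructor
      · exact hda.deriv ▸ hda
      · rw [hda.deriv]
        exact hge
    have hψs : ∀ s : ℝ, 0 < s → HasDerivAt (fun s' => ψ F s') (-η F s) s := by
      intro s hs
      have hnhds : (Set.univ : Set (EuclideanSpace ℝ (Fin d × Fin d))) ×ˢ Set.Ici (0:ℝ)
          ∈ nhds ((F, s) : EuclideanSpace ℝ (Fin d × Fin d) × ℝ) := by
        have h0 : Set.Ici (0:ℝ) ∈ nhds s := Ici_mem_nhds hs
        have h' := prod_mem_nhds (Filter.univ_mem (f := nhds F)) h0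
        simpa using h'
      have hdiff : DifferentiableAt ℝ
          (fun z : EuclideanSpace ℝ (Fin d × Fin d) × ℝ => ψ z.1 z.2) (F, s) :=
        (hψreg.contDiffAt hnhds).differentiableAt (by norm_num)
      have hda : HasDerivAt (fun s' => ψ F s')
          (fderiv ℝ (fun z : EuclideanSpace ℝ (Fin d × Fin d) × ℝ => ψ z.1 z.2) (F, s)
            ((0 : EuclideanSpace ℝ (Fin d × Fin d)), (1:ℝ))) s :=
        hdiff.hasFDerivAt.comp_hasDerivAt s (HasDerivAt.prodMk (hasDerivAt_const s F) (hasDerivAt_id s))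
      have hη := hconstη F s hs.le
      have hval : -η F s = fderiv ℝ (fun z : EuclideanSpace ℝ (Fin d × Fin d) × ℝ => ψ z.1 z.2)
          (F, s) ((0 : EuclideanSpace ℝ (Fin d × Fin d)), (1:ℝ)) := by
        rw [hη, hda.deriv]
        ring
      exact hval ▸ hda
    -- the comparison function
    set m₂ : ℝ := fderivWithin ℝ (fun z : EuclideanSpace ℝ (Fin d × Fin d) × ℝ => η z.1 z.2)
        ((Set.univ : Set (EuclideanSpace ℝ (Fin d × Fin d))) ×ˢ Set.Ici (0:ℝ)) zmin
        ((0 : EuclideanSpace ℝ (Fin d × Fin d)), (1:ℝ)) with hm₂def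
    set w : ℝ → ℝ := fun s => ψ F s - ψ F θb + η F s * (s - θb) - m₂/2 * (s - θb)^2 with hwdef
    have hwd : ∀ s : ℝ, 0 < s → s ≤ K' →
        HasDerivAt w ((deriv (fun s' => η F s') s - m₂) * (s - θb)) s := by
      intro s hs hsK
      have h1 := hψs s hs
      have h2 := (hdη s hs hsK).1
      have hmul : HasDerivAt (fun s' => η F s' * (s' - θb))
          (deriv (fun s' => η F s') s * (s - θb) + η F s * 1) s :=
        h2.mul ((hasDerivAt_id' s).sub_const θb)
      have hsq : HasDerivAt (fun s' => (s' - θb)^2)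
          ((2:ℕ) * (s - θb)^(2-1) * 1) s :=
        ((hasDerivAt_id' s).sub_const θb).pow 2
      have hsqc : HasDerivAt (fun s' => m₂/2 * (s' - θb)^2)
          (m₂/2 * ((2:ℕ) * (s - θb)^(2-1) * 1)) s := hsq.const_mul (m₂/2)
      have := ((h1.sub_const (ψ F θb)).add hmul).sub hsqc
      refine this.congr_deriv ?_
      push_cast
      ring
    have hwcont : ContinuousOn w (Set.Icc (min θ θb) (max θ θb)) := by
      have hmaps : Set.MapsTo (fun s => ((F, s) : EuclideanSpace ℝ (Fin d × Fin d) × ℝ))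
          (Set.Icc (min θ θb) (max θ θb))
          ((Set.univ : Set (EuclideanSpace ℝ (Fin d × Fin d))) ×ˢ Set.Ici (0:ℝ)) := by
        intro s hs
        refine ⟨Set.mem_univ _, ?_⟩
        have : (0:ℝ) ≤ min θ θb := le_min hθ0 hθb0.le
        exact le_trans this hs.1
      have hFθcont : Continuous (fun s : ℝ => ((F, s) :
          EuclideanSpace ℝ (Fin d × Fin d) × ℝ)) := continuous_const.prodMk continuous_id
      have hψc : ContinuousOn (fun s => ψ F s) (Set.Icc (min θ θb) (max θ θb)) :=
        (hψreg.continuousOn).comp hFθcont.continuousOn hmaps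
      have hηc : ContinuousOn (fun s => η F s) (Set.Icc (min θ θb) (max θ θb)) :=
        (hηreg.continuousOn).comp hFθcont.continuousOn hmaps
      exact ((hψc.sub continuousOn_const).add
          (hηc.mul (continuousOn_id.sub continuousOn_const))).sub
        (continuousOn_const.mul ((continuousOn_id.sub continuousOn_const).pow 2))
    have hw0 : w θb = 0 := by
      rw [hwdef]
      simp
    have hwθ : 0 ≤ w θ := by
      rcases le_total θb θ with hcase | hcase
      · -- increasing branch
        have hmin : min θ θb = θb := min_eq_right hcase
        have hmax : max θ θb = θ := max_eq_left hcase
        have hmono : MonotoneOn w (Set.Icc θb θ) := by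
          apply monotoneOn_of_deriv_nonneg (convex_Icc θb θ)
          · have hwc := hwcont
            rw [hmin, hmax] at hwc
            exact hwc
          · intro s hs
            rw [interior_Icc] at hs
            have hs1 : 0 < s := lt_trans hθb0 hs.1
            exact ((hwd s hs1 (le_trans hs.2.le hθK)).differentiableAt).differentiableWithinAt
          · intro s hs
            rw [interior_Icc] at hs
            have hs1 : 0 < s := lt_trans hθb0 hs.1
            have hsK : s ≤ K' := le_trans hs.2.le hθK
            rw [(hwd s hs1 hsK).deriv]
            have hge := (hdη s hs1 hsK).2
            have : 0 ≤ s - θb := by linarith [hs.1.le]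
            exact mul_nonneg (by linarith) this
        have := hmono (Set.left_mem_Icc.mpr hcase) (Set.right_mem_Icc.mpr hcase) hcase
        rw [hw0] at this
        exact this
      · -- decreasing branch
        have hmin : min θ θb = θ := min_eq_left hcase
        have hmax : max θ θb = θb := max_eq_right hcase
        have hanti : AntitoneOn w (Set.Icc θ θb) := by
          apply antitoneOn_of_deriv_nonpos (convex_Icc θ θb)
          · have hwc := hwcont
            rw [hmin, hmax] at hwc
            exact hwc
          · intro s hs
            rw [interior_Icc] at hs
            have hs1 : 0 < s := lt_of_le_of_lt hθ0 hs.1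
            exact ((hwd s hs1 (le_trans hs.2.le hθbK)).differentiableAt).differentiableWithinAt
          · intro s hs
            rw [interior_Icc] at hs
            have hs1 : 0 < s := lt_of_le_of_lt hθ0 hs.1
            have hsK : s ≤ K' := le_trans hs.2.le hθbK
            rw [(hwd s hs1 hsK).deriv]
            have hge := (hdη s hs1 hsK).2
            have : s - θb ≤ 0 := by linarith [hs.2.le]
            exact mul_nonpos_of_nonneg_of_nonpos (by linarith) this
        have := hanti (Set.left_mem_Icc.mpr hcase) (Set.right_mem_Icc.mpr hcase) hcase
        rw [hw0] at this
        exact this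
    rw [hwdef] at hwθ
    simp only at hwθ
    linarith
  obtain ⟨m₂, hm₂, hBq⟩ := hBq
  -- Taylor (quadratic) upper bound for the relative entropy on the box
  have hTay : ∃ K₂ : ℝ, 0 ≤ K₂ ∧
      ∀ (Fb : EuclideanSpace ℝ (Fin d × Fin d)) (θb : ℝ), ‖Fb‖ ≤ M → δ ≤ θb → θb ≤ M →
      ∀ (F : EuclideanSpace ℝ (Fin d × Fin d)) (θ : ℝ), ‖F‖ ≤ K' → 0 ≤ θ → θ ≤ K' →
        |η F θ - η Fb θb - fderiv ℝ (fun F' => η F' θb) Fb (F - Fb)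
            - deriv (fun s => η Fb s) θb * (θ - θb)| ≤
          K₂ * (‖F - Fb‖^2 + (θ - θb)^2) := by
    have hSuniq : UniqueDiffOn ℝ
        ((Set.univ : Set (EuclideanSpace ℝ (Fin d × Fin d))) ×ˢ Set.Ici (0:ℝ)) :=
      uniqueDiffOn_univ.prod (uniqueDiffOn_Ici 0)
    have hD1C1 : ContDiffOn ℝ 1
        (fderivWithin ℝ (fun z : EuclideanSpace ℝ (Fin d × Fin d) × ℝ => η z.1 z.2)
          ((Set.univ : Set (EuclideanSpace ℝ (Fin d × Fin d))) ×ˢ Set.Ici (0:ℝ)))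
        ((Set.univ : Set (EuclideanSpace ℝ (Fin d × Fin d))) ×ˢ Set.Ici (0:ℝ)) :=
      hηreg.fderivWithin hSuniq (m := 1) (by norm_num)
    have hD2cont : ContinuousOn
        (fderivWithin ℝ (fderivWithin ℝ
            (fun z : EuclideanSpace ℝ (Fin d × Fin d) × ℝ => η z.1 z.2)
            ((Set.univ : Set (EuclideanSpace ℝ (Fin d × Fin d))) ×ˢ Set.Ici (0:ℝ)))
          ((Set.univ : Set (EuclideanSpace ℝ (Fin d × Fin d))) ×ˢ Set.Ici (0:ℝ)))
        ((Set.univ : Set (EuclideanSpace ℝ (Fin d × Fin d))) ×ˢ Set.Ici (0:ℝ)) :=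
      (hD1C1.fderivWithin hSuniq (m := 0) (by norm_num)).continuousOn
    have hQsub : (Metric.closedBall (0 : EuclideanSpace ℝ (Fin d × Fin d)) K') ×ˢ Set.Icc (0:ℝ) K'
        ⊆ (Set.univ : Set (EuclideanSpace ℝ (Fin d × Fin d))) ×ˢ Set.Ici (0:ℝ) := by
      rintro ⟨z1, z2⟩ hz
      exact ⟨Set.mem_univ _, hz.2.1⟩
    have hQcpt : IsCompact ((Metric.closedBall (0 : EuclideanSpace ℝ (Fin d × Fin d)) K')
        ×ˢ Set.Icc (0:ℝ) K') := (isCompact_closedBall _ _).prod isCompact_Icc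
    obtain ⟨K₂', hK₂'⟩ := hQcpt.exists_bound_of_continuousOn
      (E := EuclideanSpace ℝ (Fin d × Fin d) × ℝ →L[ℝ] EuclideanSpace ℝ (Fin d × Fin d) × ℝ →L[ℝ] ℝ)
      (hD2cont.mono hQsub)
    refine ⟨max K₂' 0, le_max_right _ _, ?_⟩
    intro Fb θb hFbM hθb1 hθb2 F θ hFK hθ0 hθK
    have hθbpos : (0:ℝ) < θb := lt_of_lt_of_le hδ hθb1
    have hzbarQ : ((Fb, θb) : EuclideanSpace ℝ (Fin d × Fin d) × ℝ) ∈
        (Metric.closedBall (0 : EuclideanSpace ℝ (Fin d × Fin d)) K') ×ˢ Set.Icc (0:ℝ) K' :=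
      ⟨mem_closedBall_zero_iff.mpr (le_trans hFbM hMK'),
        le_trans hδ.le (le_trans hθb1 (le_refl _)), le_trans hθb2 hMK'⟩
    have hzQ : ((F, θ) : EuclideanSpace ℝ (Fin d × Fin d) × ℝ) ∈
        (Metric.closedBall (0 : EuclideanSpace ℝ (Fin d × Fin d)) K') ×ˢ Set.Icc (0:ℝ) K' :=
      ⟨mem_closedBall_zero_iff.mpr hFK, hθ0, hθK⟩
    have hQconv : Convex ℝ ((Metric.closedBall (0 : EuclideanSpace ℝ (Fin d × Fin d)) K')
        ×ˢ Set.Icc (0:ℝ) K') := (convex_closedBall _ _).prod (convex_Icc _ _)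
    have hD1wdiff : ∀ x ∈ (Metric.closedBall (0 : EuclideanSpace ℝ (Fin d × Fin d)) K')
        ×ˢ Set.Icc (0:ℝ) K',
        HasFDerivWithinAt (fderivWithin ℝ
            (fun z : EuclideanSpace ℝ (Fin d × Fin d) × ℝ => η z.1 z.2)
            ((Set.univ : Set (EuclideanSpace ℝ (Fin d × Fin d))) ×ˢ Set.Ici (0:ℝ)))
          (fderivWithin ℝ (fderivWithin ℝ
              (fun z : EuclideanSpace ℝ (Fin d × Fin d) × ℝ => η z.1 z.2)
              ((Set.univ : Set (EuclideanSpace ℝ (Fin d × Fin d))) ×ˢ Set.Ici (0:ℝ)))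
            ((Set.univ : Set (EuclideanSpace ℝ (Fin d × Fin d))) ×ˢ Set.Ici (0:ℝ)) x)
          ((Metric.closedBall (0 : EuclideanSpace ℝ (Fin d × Fin d)) K') ×ˢ Set.Icc (0:ℝ) K') x :=
      fun x hx => (((hD1C1.differentiableOn (by norm_num)) x (hQsub hx)).hasFDerivWithinAt).mono
        hQsub
    have hLip : ∀ y ∈ (Metric.closedBall (0 : EuclideanSpace ℝ (Fin d × Fin d)) K')
        ×ˢ Set.Icc (0:ℝ) K',
        ‖fderivWithin ℝ (fun z : EuclideanSpace ℝ (Fin d × Fin d) × ℝ => η z.1 z.2)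
            ((Set.univ : Set (EuclideanSpace ℝ (Fin d × Fin d))) ×ˢ Set.Ici (0:ℝ)) y
          - fderivWithin ℝ (fun z : EuclideanSpace ℝ (Fin d × Fin d) × ℝ => η z.1 z.2)
            ((Set.univ : Set (EuclideanSpace ℝ (Fin d × Fin d))) ×ˢ Set.Ici (0:ℝ)) (Fb, θb)‖
          ≤ (max K₂' 0) * ‖y - ((Fb, θb) : EuclideanSpace ℝ (Fin d × Fin d) × ℝ)‖ :=
      fun y hy => Convex.norm_image_sub_le_of_norm_hasFDerivWithin_le hD1wdiff
        (fun z hz => le_trans (hK₂' z hz) (le_max_left _ _)) hQconv hzbarQ hy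
    have hsegsub : segment ℝ ((Fb, θb) : EuclideanSpace ℝ (Fin d × Fin d) × ℝ) (F, θ)
        ⊆ (Metric.closedBall (0 : EuclideanSpace ℝ (Fin d × Fin d)) K') ×ˢ Set.Icc (0:ℝ) K' :=
      hQconv.segment_subset hzbarQ hzQ
    have hwseg : ∀ w ∈ segment ℝ ((Fb, θb) : EuclideanSpace ℝ (Fin d × Fin d) × ℝ) (F, θ),
        ‖w - ((Fb, θb) : EuclideanSpace ℝ (Fin d × Fin d) × ℝ)‖
          ≤ ‖((F, θ) : EuclideanSpace ℝ (Fin d × Fin d) × ℝ) - (Fb, θb)‖ := by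
      rintro w ⟨a, b, ha, hb, hab, rfl⟩
      have ha1 : a = 1 - b := by linarith
      have he : a • ((Fb, θb) : EuclideanSpace ℝ (Fin d × Fin d) × ℝ) + b • (F, θ) - (Fb, θb)
          = b • (((F, θ) : EuclideanSpace ℝ (Fin d × Fin d) × ℝ) - (Fb, θb)) := by
        rw [ha1, sub_smul, one_smul, smul_sub]
        abel
      rw [he, norm_smul, Real.norm_eq_abs, abs_of_nonneg hb]
      have hb1 : b ≤ 1 := by linarith
      nlinarith [norm_nonneg (((F, θ) : EuclideanSpace ℝ (Fin d × Fin d) × ℝ) - (Fb, θb))]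
    have hgder : ∀ w ∈ segment ℝ ((Fb, θb) : EuclideanSpace ℝ (Fin d × Fin d) × ℝ) (F, θ),
        HasFDerivWithinAt (fun w : EuclideanSpace ℝ (Fin d × Fin d) × ℝ => η w.1 w.2
            - fderivWithin ℝ (fun z : EuclideanSpace ℝ (Fin d × Fin d) × ℝ => η z.1 z.2)
              ((Set.univ : Set (EuclideanSpace ℝ (Fin d × Fin d))) ×ˢ Set.Ici (0:ℝ)) (Fb, θb) w)
          (fderivWithin ℝ (fun z : EuclideanSpace ℝ (Fin d × Fin d) × ℝ => η z.1 z.2)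
              ((Set.univ : Set (EuclideanSpace ℝ (Fin d × Fin d))) ×ˢ Set.Ici (0:ℝ)) w
            - fderivWithin ℝ (fun z : EuclideanSpace ℝ (Fin d × Fin d) × ℝ => η z.1 z.2)
              ((Set.univ : Set (EuclideanSpace ℝ (Fin d × Fin d))) ×ˢ Set.Ici (0:ℝ)) (Fb, θb))
          (segment ℝ ((Fb, θb) : EuclideanSpace ℝ (Fin d × Fin d) × ℝ) (F, θ)) w := by
      intro w hw
      have h1 := (((hηreg.differentiableOn (by norm_num)) w
        (hQsub (hsegsub hw))).hasFDerivWithinAt).mono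
        (le_trans hsegsub hQsub)
      exact h1.sub (((fderivWithin ℝ (fun z : EuclideanSpace ℝ (Fin d × Fin d) × ℝ => η z.1 z.2)
        ((Set.univ : Set (EuclideanSpace ℝ (Fin d × Fin d))) ×ˢ Set.Ici (0:ℝ))
        (Fb, θb)).hasFDerivAt).hasFDerivWithinAt)
    have hkey := Convex.norm_image_sub_le_of_norm_hasFDerivWithin_le hgder
      (fun w hw => le_trans (hLip w (hsegsub hw)) (mul_le_mul_of_nonneg_left (hwseg w hw)
        (le_max_right K₂' 0)))
      (convex_segment _ _) (left_mem_segment ℝ _ _) (right_mem_segment ℝ _ _)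
    -- identify the left-hand side
    have hnhdsb : (Set.univ : Set (EuclideanSpace ℝ (Fin d × Fin d))) ×ˢ Set.Ici (0:ℝ)
        ∈ nhds ((Fb, θb) : EuclideanSpace ℝ (Fin d × Fin d) × ℝ) := by
      have h0 : Set.Ici (0:ℝ) ∈ nhds θb := Ici_mem_nhds hθbpos
      have h' := prod_mem_nhds (Filter.univ_mem (f := nhds Fb)) h0
      simpa using h'
    have hDW : fderivWithin ℝ (fun z : EuclideanSpace ℝ (Fin d × Fin d) × ℝ => η z.1 z.2)
        ((Set.univ : Set (EuclideanSpace ℝ (Fin d × Fin d))) ×ˢ Set.Ici (0:ℝ)) (Fb, θb)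
        = fderiv ℝ (fun z : EuclideanSpace ℝ (Fin d × Fin d) × ℝ => η z.1 z.2) (Fb, θb) :=
      fderivWithin_of_mem_nhds hnhdsb
    have h1 := hpart Fb θb hθbpos (F - Fb) (θ - θb)
    rw [← hDW] at h1
    have h2 : (fderivWithin ℝ (fun z : EuclideanSpace ℝ (Fin d × Fin d) × ℝ => η z.1 z.2)
        ((Set.univ : Set (EuclideanSpace ℝ (Fin d × Fin d))) ×ˢ Set.Ici (0:ℝ)) (Fb, θb))
        (((F, θ) : EuclideanSpace ℝ (Fin d × Fin d) × ℝ) - (Fb, θb))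
        = (fderivWithin ℝ (fun z : EuclideanSpace ℝ (Fin d × Fin d) × ℝ => η z.1 z.2)
          ((Set.univ : Set (EuclideanSpace ℝ (Fin d × Fin d))) ×ˢ Set.Ici (0:ℝ)) (Fb, θb)) (F, θ)
        - (fderivWithin ℝ (fun z : EuclideanSpace ℝ (Fin d × Fin d) × ℝ => η z.1 z.2)
          ((Set.univ : Set (EuclideanSpace ℝ (Fin d × Fin d))) ×ˢ Set.Ici (0:ℝ)) (Fb, θb))
          (Fb, θb) := map_sub _ _ _
    have h3 : (((F, θ) : EuclideanSpace ℝ (Fin d × Fin d) × ℝ) - (Fb, θb))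
        = ((F - Fb, θ - θb) : EuclideanSpace ℝ (Fin d × Fin d) × ℝ) := rfl
    rw [h3] at h2
    have hid : η F θ - η Fb θb - fderiv ℝ (fun F' => η F' θb) Fb (F - Fb)
            - deriv (fun s => η Fb s) θb * (θ - θb)
        = (η F θ - (fderivWithin ℝ (fun z : EuclideanSpace ℝ (Fin d × Fin d) × ℝ => η z.1 z.2)
            ((Set.univ : Set (EuclideanSpace ℝ (Fin d × Fin d))) ×ˢ Set.Ici (0:ℝ)) (Fb, θb)) (F, θ))
          - (η Fb θb - (fderivWithin ℝ
              (fun z : EuclideanSpace ℝ (Fin d × Fin d) × ℝ => η z.1 z.2)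
              ((Set.univ : Set (EuclideanSpace ℝ (Fin d × Fin d))) ×ˢ Set.Ici (0:ℝ)) (Fb, θb))
            (Fb, θb)) := by
      linear_combination -h1 - h2
    have habs : |η F θ - η Fb θb - fderiv ℝ (fun F' => η F' θb) Fb (F - Fb)
            - deriv (fun s => η Fb s) θb * (θ - θb)|
        ≤ (max K₂' 0) * ‖((F, θ) : EuclideanSpace ℝ (Fin d × Fin d) × ℝ) - (Fb, θb)‖
          * ‖((F, θ) : EuclideanSpace ℝ (Fin d × Fin d) × ℝ) - (Fb, θb)‖ := by
      rw [hid, ← Real.norm_eq_abs]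
      exact hkey
    have hnz : ‖((F, θ) : EuclideanSpace ℝ (Fin d × Fin d) × ℝ) - (Fb, θb)‖
        * ‖((F, θ) : EuclideanSpace ℝ (Fin d × Fin d) × ℝ) - (Fb, θb)‖
        ≤ ‖F - Fb‖^2 + (θ - θb)^2 := by
      have hn : ‖((F, θ) : EuclideanSpace ℝ (Fin d × Fin d) × ℝ) - (Fb, θb)‖
          = max ‖F - Fb‖ |θ - θb| := by
        rw [h3, Prod.norm_def]
        simp [Real.norm_eq_abs]
      rw [hn]
      rcases max_cases ‖F - Fb‖ |θ - θb| with ⟨he, _⟩ | ⟨he, _⟩ <;> rw [he]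
      · nlinarith [sq_nonneg (θ - θb), norm_nonneg (F - Fb)]
      · nlinarith [sq_nonneg ‖F - Fb‖, sq_abs (θ - θb), abs_nonneg (θ - θb)]
    have hK₂0' : (0:ℝ) ≤ max K₂' 0 := le_max_right _ _
    calc |η F θ - η Fb θb - fderiv ℝ (fun F' => η F' θb) Fb (F - Fb)
            - deriv (fun s => η Fb s) θb * (θ - θb)|
        ≤ (max K₂' 0) * ‖((F, θ) : EuclideanSpace ℝ (Fin d × Fin d) × ℝ) - (Fb, θb)‖
          * ‖((F, θ) : EuclideanSpace ℝ (Fin d × Fin d) × ℝ) - (Fb, θb)‖ := habs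
      _ = (max K₂' 0) * (‖((F, θ) : EuclideanSpace ℝ (Fin d × Fin d) × ℝ) - (Fb, θb)‖
          * ‖((F, θ) : EuclideanSpace ℝ (Fin d × Fin d) × ℝ) - (Fb, θb)‖) := by ring
      _ ≤ (max K₂' 0) * (‖F - Fb‖^2 + (θ - θb)^2) :=
          mul_le_mul_of_nonneg_left hnz hK₂0'
  obtain ⟨K₂, hK₂0, hTay⟩ := hTay
  -- final constant
  set μ : ℝ := min (m₁/2) (m₂/2) with hμ
  clear_value μ
  have hμ0 : 0 < μ := by rw [hμ]; exact lt_min (by linarith) (by linarith)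
  have hμ1 : μ ≤ m₁/2 := by rw [hμ]; exact min_le_left _ _
  have hμ2 : μ ≤ m₂/2 := by rw [hμ]; exact min_le_right _ _
  refine ⟨max 1 ((K₂+1)/μ), lt_of_lt_of_le one_pos (le_max_left _ _), ?_⟩
  intro Fb vb θb hFbM hvbM hθb1 hθb2 F v θ hθ0
  set C : ℝ := max 1 ((K₂+1)/μ) with hC
  clear_value C
  have hC1 : (1:ℝ) ≤ C := by rw [hC]; exact le_max_left _ _
  have hC0 : (0:ℝ) ≤ C := by linarith
  set P : ℝ := ‖F‖ ^ p + θ ^ q with hP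
  clear_value P
  have hP0 : 0 ≤ P := by
    rw [hP]
    exact add_nonneg (Real.rpow_nonneg (norm_nonneg _) _) (Real.rpow_nonneg hθ0 _)
  set G : ℝ := (ψ F θ - ψ Fb θb - ⟪Sig Fb θb, F - Fb⟫ + η Fb θb * (θ - θb))
                + (η F θ - η Fb θb) * (θ - θb) with hGdef
  set N : ℝ := |η F θ - η Fb θb - fderiv ℝ (fun F' => η F' θb) Fb (F - Fb)
              - deriv (fun s => η Fb s) θb * (θ - θb)| with hNdef
  have hkin : 0 ≤ (1/2) * ‖v - vb‖ ^ 2 := by positivity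
  have main : N ≤ C * G := by
    rcases le_or_gt P R with hreg | hreg
    · -- compact region
      have hFK : ‖F‖ ≤ K' := by
        have h1 : ‖F‖ ^ p ≤ R := by
          have h0 : (0:ℝ) ≤ θ ^ q := Real.rpow_nonneg hθ0 _
          rw [hP] at hreg; linarith
        exact le_trans (le_max_one_of_rpow_le hp.le (norm_nonneg _) h1) hRK'
      have hθK : θ ≤ K' := by
        have h1 : θ ^ q ≤ R := by
          have h0 : (0:ℝ) ≤ ‖F‖ ^ p := Real.rpow_nonneg (norm_nonneg _) _
          rw [hP] at hreg; linarith
        exact le_trans (le_max_one_of_rpow_le hq.le hθ0 h1) hRK'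
      have hA := hAq Fb θb hFbM hθb1 hθb2 F hFK
      have hB := hBq F θb hFK hθb1 hθb2 θ hθ0 hθK
      have hT := hTay Fb θb hFbM hθb1 hθb2 F θ hFK hθ0 hθK
      have hs2 : 0 ≤ ‖F - Fb‖^2 + (θ - θb)^2 := by positivity
      have hGsplit : G = (ψ F θb - ψ Fb θb - ⟪Sig Fb θb, F - Fb⟫)
          + (ψ F θ - ψ F θb + η F θ * (θ - θb)) := by rw [hGdef]; ring
      have hGlow : μ * (‖F - Fb‖^2 + (θ - θb)^2) ≤ G := by
        have h1 : μ ≤ m₁/2 := hμ1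
        have h2 : μ ≤ m₂/2 := hμ2
        have h3 : μ * ‖F - Fb‖^2 ≤ m₁/2 * ‖F - Fb‖^2 :=
          mul_le_mul_of_nonneg_right h1 (by positivity)
        have h4 : μ * (θ - θb)^2 ≤ m₂/2 * (θ - θb)^2 :=
          mul_le_mul_of_nonneg_right h2 (by positivity)
        have h5 : μ * (‖F - Fb‖^2 + (θ - θb)^2) = μ * ‖F - Fb‖^2 + μ * (θ - θb)^2 :=
          mul_add _ _ _
        rw [hGsplit]; linarith
      have hG0 : 0 ≤ G := le_trans (by positivity) hGlow
      have hCμ : (K₂+1)/μ ≤ C := by rw [hC]; exact le_max_right _ _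
      calc N ≤ K₂ * (‖F - Fb‖^2 + (θ - θb)^2) := hT
        _ ≤ (K₂+1)/μ * (μ * (‖F - Fb‖^2 + (θ - θb)^2)) := by
            rw [← mul_assoc, div_mul_cancel₀ _ (ne_of_gt hμ0)]
            exact mul_le_mul_of_nonneg_right (by linarith) hs2
        _ ≤ (K₂+1)/μ * G := by
            apply mul_le_mul_of_nonneg_left hGlow
            positivity
        _ ≤ C * G := mul_le_mul_of_nonneg_right hCμ hG0
    · -- far region
      have hRP : R ≤ P := hreg.le
      have hCGP : CG ≤ c/4 * P := by
        have h1 : 4*CG/c ≤ R := by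
          rw [hR]; exact le_trans (le_max_left _ _) (le_max_right _ _)
        have h2 : 4*CG/c ≤ P := le_trans h1 hRP
        rw [div_le_iff₀ hc] at h2
        linarith [(by ring : c/4 * P = (P * c)/4)]
      have hCNP : CN ≤ c/8 * P := by
        have h1 : 8*CN/c ≤ R := by
          rw [hR]; exact le_trans (le_max_right _ _) (le_max_right _ _)
        have h2 : 8*CN/c ≤ P := le_trans h1 hRP
        rw [div_le_iff₀ hc] at h2
        linarith [(by ring : c/8 * P = (P * c)/8)]
      have hG1 : c/4 * P ≤ G := by
        have := hGfar Fb θb hFbM hθb1 hθb2 F θ hθ0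
        rw [← hP, ← hGdef] at this
        linarith
      have hN1 : N ≤ c/4 * P := by
        have := hNfar Fb θb hFbM hθb1 hθb2 F θ hθ0
        rw [← hP, ← hNdef] at this
        linarith
      have hG0 : 0 ≤ G := le_trans (by positivity) hG1
      calc N ≤ c/4 * P := hN1
        _ ≤ G := hG1
        _ ≤ C * G := le_mul_of_one_le_left hG0 hC1
  calc N ≤ C * G := main
    _ ≤ C * (G + (1/2) * ‖v - vb‖ ^ 2) := mul_le_mul_of_nonneg_left (by linarith) hC0
    _ = C * ((ψ F θ - ψ Fb θb - ⟪Sig Fb θb, F - Fb⟫ + η Fb θb * (θ - θb))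
                + (η F θ - η Fb θb) * (θ - θb) + (1/2) * ‖v - vb‖ ^ 2) := by
        rw [hGdef]
end
end

section
/- Distance-like lower bound for the relative total energy (Lemma on I, part (iv)): Assume (F̄, v̄, θ̄) ∈ Γ_{M,δ}, that ψ(F,θ) ∈ C³(ℝ^{d×d} × [0,∞)) and η(F,θ), Σ(F,θ) ∈ C²(ℝ^{d×d} × [0,∞)) satisfy the constitutive relations Σ = ∂ψ/∂F, η = −∂ψ/∂θ, e = ψ + θη, and the Gibbs conditions ψ_FF > 0 and η_θ > 0. Under the growth hypotheses (a1), (a2), (a3), there exist constants R, K₁ and K₂ such that I(F,v,θ|F̄,v̄,θ̄) ≥ (1/4)K₁(|F − F̄|^p + |θ − θ̄|^q + |v − v̄|²) whenever |F|^p + θ^q + |v|² > R, and I(F,v,θ|F̄,v̄,θ̄) ≥ K₂(|F − F̄|² + |θ − θ̄|² + |v − v̄|²) whenever |F|^p + θ^q + |v|² ≤ R, for all (F̄, v̄, θ̄) ∈ Γ_{M,δ}. -/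
open scoped RealInnerProductSpace Topology
open MeasureTheory

noncomputable section

set_option maxHeartbeats 1600000

open scoped RealInnerProductSpace Topology

private lemma aux_min_at {G : ℝ → ℝ} {k : ℝ → ℝ} {a b t0 : ℝ}
    (hcont : ContinuousOn G (Set.Icc a b))
    (hderiv : ∀ s ∈ Set.Ioo a b, HasDerivAt G (k s) s)
    (hsign : ∀ s ∈ Set.Ioo a b, 0 ≤ k s * (s - t0))
    (ht0 : t0 ∈ Set.Icc a b) : ∀ t ∈ Set.Icc a b, G t0 ≤ G t := by
  intro t ht
  rcases le_total t t0 with h | h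
  · have hA : AntitoneOn G (Set.Icc a t0) := by
      apply antitoneOn_of_deriv_nonpos (convex_Icc a t0)
        (hcont.mono (Set.Icc_subset_Icc le_rfl ht0.2))
      · intro s hs
        rw [interior_Icc] at hs
        have hs' : s ∈ Set.Ioo a b := ⟨hs.1, lt_of_lt_of_le hs.2 ht0.2⟩
        exact (hderiv s hs').differentiableAt.differentiableWithinAt
      · intro s hs
        rw [interior_Icc] at hs
        have hs' : s ∈ Set.Ioo a b := ⟨hs.1, lt_of_lt_of_le hs.2 ht0.2⟩
        rw [(hderiv s hs').deriv]
        nlinarith [hsign s hs', hs.2]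
    exact hA ⟨ht.1, h⟩ ⟨ht0.1, le_rfl⟩ h
  · have hA : MonotoneOn G (Set.Icc t0 b) := by
      apply monotoneOn_of_deriv_nonneg (convex_Icc t0 b)
        (hcont.mono (Set.Icc_subset_Icc ht0.1 le_rfl))
      · intro s hs
        rw [interior_Icc] at hs
        have hs' : s ∈ Set.Ioo a b := ⟨lt_of_le_of_lt ht0.1 hs.1, hs.2⟩
        exact (hderiv s hs').differentiableAt.differentiableWithinAt
      · intro s hs
        rw [interior_Icc] at hs
        have hs' : s ∈ Set.Ioo a b := ⟨lt_of_le_of_lt ht0.1 hs.1, hs.2⟩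
        rw [(hderiv s hs').deriv]
        nlinarith [hsign s hs', hs.1]
    exact hA ⟨le_rfl, ht0.2⟩ ⟨h, ht.2⟩ h

private lemma aux_young {C c p : ℝ} (hC : 0 ≤ C) (hc : 0 < c) (hp : 1 < p) :
    ∃ L, 0 ≤ L ∧ ∀ x, 0 ≤ x → C * x ≤ c * x ^ p + L := by
  set t := max 1 ((C / c) ^ (1 / (p - 1))) with htdef
  have ht0 : (0:ℝ) ≤ t := le_trans zero_le_one (le_max_left _ _)
  refine ⟨C * t, mul_nonneg hC ht0, fun x hx => ?_⟩
  rcases le_total x t with h | h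
  · have h1 : C * x ≤ C * t := mul_le_mul_of_nonneg_left h hC
    have h2 : 0 ≤ c * x ^ p := mul_nonneg hc.le (Real.rpow_nonneg hx p)
    linarith
  · have hx1 : (1:ℝ) ≤ x := le_trans (le_max_left _ _) h
    have hxpos : (0:ℝ) < x := lt_of_lt_of_le one_pos hx1
    have hxp : C ≤ c * x ^ (p - 1) := by
      have h1 : (C / c) ^ (1 / (p - 1)) ≤ x := le_trans (le_max_right _ _) h
      have h2 : ((C / c) ^ (1 / (p - 1))) ^ (p - 1) ≤ x ^ (p - 1) :=
        Real.rpow_le_rpow (Real.rpow_nonneg (div_nonneg hC hc.le) _) h1 (by linarith)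
      rw [← Real.rpow_mul (div_nonneg hC hc.le), one_div,
        inv_mul_cancel₀ (by linarith : p - 1 ≠ 0), Real.rpow_one] at h2
      have : c * (C / c) ≤ c * x ^ (p - 1) := mul_le_mul_of_nonneg_left h2 hc.le
      calc C = c * (C / c) := by field_simp
        _ ≤ c * x ^ (p - 1) := this
    have h3 : C * x ≤ c * x ^ (p - 1) * x := mul_le_mul_of_nonneg_right hxp hxpos.le
    have h4 : x ^ (p - 1) * x = x ^ p := by
      have := Real.rpow_add hxpos (p - 1) 1
      rw [sub_add_cancel, Real.rpow_one] at this
      linarith [this]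
    have h5 : 0 ≤ C * t := mul_nonneg hC ht0
    nlinarith [h3, h4]

private lemma aux_rpow_add {a b p : ℝ} (ha : 0 ≤ a) (hb : 0 ≤ b) (hp : 0 ≤ p) :
    (a + b) ^ p ≤ 2 ^ p * (a ^ p + b ^ p) := by
  have h1 : a + b ≤ 2 * max a b := by
    rcases le_total a b with h | h
    · rw [max_eq_right h]; linarith
    · rw [max_eq_left h]; linarith
  have h2 : (a + b) ^ p ≤ (2 * max a b) ^ p :=
    Real.rpow_le_rpow (by positivity) h1 hp
  rw [Real.mul_rpow (by norm_num) (le_max_of_le_left ha)] at h2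
  have h3 : (max a b) ^ p ≤ a ^ p + b ^ p := by
    rcases le_total a b with h | h
    · rw [max_eq_right h]; nlinarith [Real.rpow_nonneg ha p]
    · rw [max_eq_left h]; nlinarith [Real.rpow_nonneg hb p]
  nlinarith [Real.rpow_nonneg (show (0:ℝ) ≤ 2 by norm_num) p, h2, h3]

private lemma aux_le_rpow_inv {x A p : ℝ} (hx : 0 ≤ x) (hp : 0 < p) (h : x ^ p ≤ A) :
    x ≤ A ^ (1 / p) := by
  have hA : 0 ≤ A := le_trans (Real.rpow_nonneg hx p) h
  have := Real.rpow_le_rpow (Real.rpow_nonneg hx p) h (by positivity : (0:ℝ) ≤ 1/p)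
  rwa [← Real.rpow_mul hx, mul_one_div, div_self hp.ne', Real.rpow_one] at this

/-- **Lemma 5.2 (iv): distance-like lower bound for the relative total energy.**
For `(F̄,v̄,θ̄) ∈ Γ_{M,δ}`, under the constitutive relations, the Gibbs conditions and
the growth hypotheses (a1)–(a3), there are constants `R`, `K₁`, `K₂` such that
`I ≥ ¼K₁(|F−F̄|^p + |θ−θ̄|^q + |v−v̄|²)` when `|F|^p + θ^q + |v|² > R`, and
`I ≥ K₂(|F−F̄|² + |θ−θ̄|² + |v−v̄|²)` when `|F|^p + θ^q + |v|² ≤ R`. -/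
theorem relative_total_energy_distance_like_bound
    (d : ℕ) (p q : ℝ) (hp : 1 < p) (hq : 1 < q)
    (ψ : EuclideanSpace ℝ (Fin d × Fin d) → ℝ → ℝ)
    (Sig : EuclideanSpace ℝ (Fin d × Fin d) → ℝ → EuclideanSpace ℝ (Fin d × Fin d))
    (η : EuclideanSpace ℝ (Fin d × Fin d) → ℝ → ℝ)
    -- regularity: ψ ∈ C³, η, Σ ∈ C² on ℝ^{d×d} × [0,∞)
    (hψreg : ContDiffOn ℝ 3 (fun z : EuclideanSpace ℝ (Fin d × Fin d) × ℝ => ψ z.1 z.2)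
      (Set.univ ×ˢ Set.Ici 0))
    (hηreg : ContDiffOn ℝ 2 (fun z : EuclideanSpace ℝ (Fin d × Fin d) × ℝ => η z.1 z.2)
      (Set.univ ×ˢ Set.Ici 0))
    (hSigreg : ContDiffOn ℝ 2 (fun z : EuclideanSpace ℝ (Fin d × Fin d) × ℝ => Sig z.1 z.2)
      (Set.univ ×ˢ Set.Ici 0))
    -- constitutive relations: Σ = ∂ψ/∂F, η = −∂ψ/∂θ (and e = ψ + θη)
    (hconstSig : ∀ F θ, 0 ≤ θ → ∀ V, ⟪Sig F θ, V⟫ = fderiv ℝ (fun F' => ψ F' θ) F V)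
    (hconstη : ∀ F θ, 0 ≤ θ → η F θ = - deriv (fun s => ψ F s) θ)
    -- Gibbs thermodynamic stability: ψ_FF > 0 and η_θ > 0
    (hGibbsF : ∀ F θ, 0 ≤ θ → ∀ V : EuclideanSpace ℝ (Fin d × Fin d), V ≠ 0 →
      0 < iteratedFDeriv ℝ 2 (fun F' => ψ F' θ) F ![V, V])
    (hGibbsθ : ∀ F θ, 0 ≤ θ → 0 < deriv (fun s => η F s) θ)
    -- (a1): growth of the internal energy e = ψ + θ η
    (c : ℝ) (hc : 0 < c)
    (ha1 : ∀ F θ, 0 ≤ θ →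
      c * (‖F‖ ^ p + θ ^ q) - c ≤ ψ F θ + θ * η F θ ∧
      ψ F θ + θ * η F θ ≤ c * (‖F‖ ^ p + θ ^ q) + c)
    -- (a2): |Σ(F,θ)|/(|F|^p + θ^q) → 0
    (ha2 : ∀ ε > (0:ℝ), ∃ R₀, ∀ F θ, 0 ≤ θ → R₀ ≤ ‖F‖ ^ p + θ ^ q →
      ‖Sig F θ‖ ≤ ε * (‖F‖ ^ p + θ ^ q))
    -- (a3): |η(F,θ)|/(|F|^p + θ^q) → 0
    (ha3 : ∀ ε > (0:ℝ), ∃ R₀, ∀ F θ, 0 ≤ θ → R₀ ≤ ‖F‖ ^ p + θ ^ q →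
      |η F θ| ≤ ε * (‖F‖ ^ p + θ ^ q))
    -- the compact set Γ_{M,δ}
    (M δ : ℝ) (hM : 0 < M) (hδ : 0 < δ) :
    ∃ R : ℝ, ∃ K₁ > (0:ℝ), ∃ K₂ > (0:ℝ),
      ∀ (Fb : EuclideanSpace ℝ (Fin d × Fin d)) (vb : EuclideanSpace ℝ (Fin d)) (θb : ℝ),
        ‖Fb‖ ≤ M → ‖vb‖ ≤ M → δ ≤ θb → θb ≤ M →
        ∀ (F : EuclideanSpace ℝ (Fin d × Fin d)) (v : EuclideanSpace ℝ (Fin d)) (θ : ℝ),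
          0 ≤ θ →
          (R < ‖F‖ ^ p + θ ^ q + ‖v‖ ^ 2 →
            (1/4) * K₁ * (‖F - Fb‖ ^ p + |θ - θb| ^ q + ‖v - vb‖ ^ 2) ≤
              (ψ F θ - ψ Fb θb - ⟪Sig Fb θb, F - Fb⟫ + η Fb θb * (θ - θb))
                + (η F θ - η Fb θb) * (θ - θb) + (1/2) * ‖v - vb‖ ^ 2) ∧
          (‖F‖ ^ p + θ ^ q + ‖v‖ ^ 2 ≤ R →
            K₂ * (‖F - Fb‖ ^ 2 + |θ - θb| ^ 2 + ‖v - vb‖ ^ 2) ≤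
              (ψ F θ - ψ Fb θb - ⟪Sig Fb θb, F - Fb⟫ + η Fb θb * (θ - θb))
                + (η F θ - η Fb θb) * (θ - θb) + (1/2) * ‖v - vb‖ ^ 2) := by
  set S : Set (EuclideanSpace ℝ (Fin d × Fin d) × ℝ) := Set.univ ×ˢ Set.Ici 0 with hSdef
  have hSuniq : UniqueDiffOn ℝ S := uniqueDiffOn_univ.prod (uniqueDiffOn_Ici 0)
  have hmemS : ∀ (Fx : EuclideanSpace ℝ (Fin d × Fin d)) (θ : ℝ), 0 ≤ θ → (Fx, θ) ∈ S :=
    fun Fx θ hθ => ⟨Set.mem_univ _, hθ⟩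
  set Ψ : EuclideanSpace ℝ (Fin d × Fin d) × ℝ → ℝ := fun z => ψ z.1 z.2 with hΨdef
  set Ψ₁ := fderivWithin ℝ Ψ S with hΨ₁def
  have hΨ₁reg : ContDiffOn ℝ 2 Ψ₁ S := hψreg.fderivWithin (m := 2) hSuniq (by norm_num)
  set Ψ₂ := fderivWithin ℝ Ψ₁ S with hΨ₂def
  have hΨ₂cont : ContinuousOn Ψ₂ S := hΨ₁reg.continuousOn_fderivWithin hSuniq (by norm_num)
  set J : EuclideanSpace ℝ (Fin d × Fin d) →L[ℝ]
      EuclideanSpace ℝ (Fin d × Fin d) × ℝ :=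
    (ContinuousLinearMap.id ℝ (EuclideanSpace ℝ (Fin d × Fin d))).prod 0 with hJdef
  have hJapp : ∀ V : EuclideanSpace ℝ (Fin d × Fin d), J V = (V, (0:ℝ)) := fun V => rfl
  -- P2 : slices fully smooth
  have hslice : ∀ θ : ℝ, 0 ≤ θ → ContDiff ℝ 3 (fun F' => ψ F' θ) := by
    intro θ hθ
    rw [← contDiffOn_univ]
    exact hψreg.comp ((contDiff_id.prodMk contDiff_const).contDiffOn)
      (fun x _ => hmemS x θ hθ)
  -- P3 : first partial derivative identity
  have hfd1 : ∀ (θ : ℝ), 0 ≤ θ → ∀ Fx, HasFDerivAt (fun F' => ψ F' θ)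
      ((Ψ₁ (Fx, θ)).comp J) Fx := by
    intro θ hθ Fx
    have hdiff : DifferentiableWithinAt ℝ Ψ S (Fx, θ) :=
      (hψreg.differentiableOn (by norm_num)) _ (hmemS Fx θ hθ)
    have h1 : HasFDerivWithinAt Ψ (Ψ₁ (Fx, θ)) S (Fx, θ) := hdiff.hasFDerivWithinAt
    have h2 : HasFDerivAt (fun F' : EuclideanSpace ℝ (Fin d × Fin d) => (F', θ)) J Fx :=
      (hasFDerivAt_id Fx).prodMk (hasFDerivAt_const θ Fx)
    have h3 := h1.comp Fx (h2.hasFDerivWithinAt (s := Set.univ))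
      (fun x _ => hmemS x θ hθ)
    rw [hasFDerivWithinAt_univ] at h3
    exact h3
  have hfd1' : ∀ (θ : ℝ), 0 ≤ θ → ∀ Fx,
      fderiv ℝ (fun F' => ψ F' θ) Fx = (Ψ₁ (Fx, θ)).comp J :=
    fun θ hθ Fx => (hfd1 θ hθ Fx).fderiv
  -- cJ : precomposition with J, as a CLM
  set cJ : (EuclideanSpace ℝ (Fin d × Fin d) × ℝ →L[ℝ] ℝ) →L[ℝ]
      (EuclideanSpace ℝ (Fin d × Fin d) →L[ℝ] ℝ) :=
    (ContinuousLinearMap.compL ℝ (EuclideanSpace ℝ (Fin d × Fin d))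
      (EuclideanSpace ℝ (Fin d × Fin d) × ℝ) ℝ).flip J with hcJdef
  have hcJapp : ∀ (L : EuclideanSpace ℝ (Fin d × Fin d) × ℝ →L[ℝ] ℝ),
      cJ L = L.comp J := fun L => rfl
  -- P4 : second partial derivative identity
  have hfd2 : ∀ (θ : ℝ), 0 ≤ θ → ∀ Fx V,
      iteratedFDeriv ℝ 2 (fun F' => ψ F' θ) Fx ![V, V] = Ψ₂ (Fx, θ) (V, 0) (V, 0) := by
    intro θ hθ Fx V
    have hdiff : DifferentiableWithinAt ℝ Ψ₁ S (Fx, θ) :=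
      (hΨ₁reg.differentiableOn (by norm_num)) _ (hmemS Fx θ hθ)
    have h1 : HasFDerivWithinAt Ψ₁ (Ψ₂ (Fx, θ)) S (Fx, θ) := hdiff.hasFDerivWithinAt
    have h2 : HasFDerivAt (fun F' : EuclideanSpace ℝ (Fin d × Fin d) => (F', θ)) J Fx :=
      (hasFDerivAt_id Fx).prodMk (hasFDerivAt_const θ Fx)
    have h3 := h1.comp Fx (h2.hasFDerivWithinAt (s := Set.univ))
      (fun x _ => hmemS x θ hθ)
    rw [hasFDerivWithinAt_univ] at h3
    have h4 : HasFDerivAt (fun F' => fderiv ℝ (fun F'' => ψ F'' θ) F')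
        (cJ.comp ((Ψ₂ (Fx, θ)).comp J)) Fx := by
      have h5 := cJ.hasFDerivAt.comp Fx h3
      have heq : (fun F' => fderiv ℝ (fun F'' => ψ F'' θ) F') =
          (cJ ∘ fun F' => Ψ₁ (F', θ)) := by
        funext F'
        rw [hfd1' θ hθ F']; rfl
      rw [heq]
      exact h5
    rw [iteratedFDeriv_two_apply]
    have h6 : fderiv ℝ (fderiv ℝ (fun F'' => ψ F'' θ)) Fx = cJ.comp ((Ψ₂ (Fx, θ)).comp J) :=
      h4.fderiv
    rw [h6]
    simp [Matrix.cons_val_zero, Matrix.cons_val_one, hcJapp, hJapp]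
  -- Q continuity
  set Qf : (EuclideanSpace ℝ (Fin d × Fin d) × ℝ) → EuclideanSpace ℝ (Fin d × Fin d) → ℝ :=
    fun z V => Ψ₂ z (V, 0) (V, 0) with hQfdef
  have hQcont : ContinuousOn (fun w : (EuclideanSpace ℝ (Fin d × Fin d) × ℝ) ×
      EuclideanSpace ℝ (Fin d × Fin d) => Qf w.1 w.2) (S ×ˢ Set.univ) := by
    have h1 : ContinuousOn (fun w : (EuclideanSpace ℝ (Fin d × Fin d) × ℝ) ×
        EuclideanSpace ℝ (Fin d × Fin d) => Ψ₂ w.1) (S ×ˢ Set.univ) :=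
      hΨ₂cont.comp continuous_fst.continuousOn (fun w hw => hw.1)
    have h2 : ContinuousOn (fun w : (EuclideanSpace ℝ (Fin d × Fin d) × ℝ) ×
        EuclideanSpace ℝ (Fin d × Fin d) => ((w.2 : EuclideanSpace ℝ (Fin d × Fin d)), (0:ℝ)))
        (S ×ˢ Set.univ) := (continuous_snd.prodMk continuous_const).continuousOn
    exact (h1.clm_apply h2).clm_apply h2
  -- η machinery
  set Hη : EuclideanSpace ℝ (Fin d × Fin d) × ℝ → ℝ := fun z => η z.1 z.2 with hHηdef
  set N := fderivWithin ℝ Hη S with hNdef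
  have hNcont : ContinuousOn N S := hηreg.continuousOn_fderivWithin hSuniq (by norm_num)
  set mfun : EuclideanSpace ℝ (Fin d × Fin d) × ℝ → ℝ := fun z => N z (0, 1) with hmfundef
  have hmcont : ContinuousOn mfun S := hNcont.clm_apply continuousOn_const
  have hdiffη : ∀ (Fx : EuclideanSpace ℝ (Fin d × Fin d)) (θ : ℝ), 0 ≤ θ →
      DifferentiableAt ℝ (fun s => η Fx s) θ := by
    intro Fx θ hθ
    by_contra h
    have h0 := deriv_zero_of_not_differentiableAt h
    have h1 := hGibbsθ Fx θ hθ
    rw [h0] at h1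
    exact lt_irrefl _ h1
  have hmeq : ∀ (Fx : EuclideanSpace ℝ (Fin d × Fin d)) (θ : ℝ), 0 ≤ θ →
      deriv (fun s => η Fx s) θ = mfun (Fx, θ) := by
    intro Fx θ hθ
    have h1 : HasFDerivWithinAt Hη (N (Fx, θ)) S (Fx, θ) :=
      ((hηreg.differentiableOn (by norm_num)) _ (hmemS Fx θ hθ)).hasFDerivWithinAt
    have hg : HasDerivAt (fun s : ℝ => ((Fx : EuclideanSpace ℝ (Fin d × Fin d)), s))
        ((0 : EuclideanSpace ℝ (Fin d × Fin d)), (1:ℝ)) θ :=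
      (hasDerivAt_const θ Fx).prodMk (hasDerivAt_id θ)
    have h2 : HasDerivWithinAt (fun s => η Fx s) (N (Fx, θ) (0, 1)) (Set.Ici 0) θ :=
      h1.comp_hasDerivWithinAt θ (hg.hasDerivWithinAt) (fun s hs => hmemS Fx s hs)
    have h3 : HasDerivWithinAt (fun s => η Fx s) (deriv (fun s => η Fx s) θ) (Set.Ici 0) θ :=
      (hdiffη Fx θ hθ).hasDerivAt.hasDerivWithinAt
    have hu : UniqueDiffWithinAt ℝ (Set.Ici (0:ℝ)) θ := uniqueDiffOn_Ici 0 θ hθ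
    rw [← h3.derivWithin hu]; exact h2.derivWithin hu
  have hmpos : ∀ z ∈ S, 0 < mfun z := by
    intro z hz
    have := hGibbsθ z.1 z.2 hz.2
    rwa [hmeq z.1 z.2 hz.2] at this
  -- bounds on the compact set Γ
  set Γc : Set (EuclideanSpace ℝ (Fin d × Fin d) × ℝ) :=
    Metric.closedBall 0 M ×ˢ Set.Icc δ M with hΓcdef
  have hΓsub : Γc ⊆ S := fun z hz => ⟨Set.mem_univ _, le_trans hδ.le hz.2.1⟩
  have hΓcomp : IsCompact Γc := (isCompact_closedBall _ _).prod isCompact_Icc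
  obtain ⟨C₁, hC₁⟩ := hΓcomp.exists_bound_of_continuousOn
    ((hSigreg.continuousOn).mono hΓsub)
  obtain ⟨C₂, hC₂⟩ := hΓcomp.exists_bound_of_continuousOn
    ((hψreg.continuousOn).mono hΓsub)
  set C0 : ℝ := max (max C₁ C₂) 0 with hC0def
  have hC0 : 0 ≤ C0 := le_max_right _ _
  have hΓmem : ∀ (Fb : EuclideanSpace ℝ (Fin d × Fin d)) (θb : ℝ),
      ‖Fb‖ ≤ M → δ ≤ θb → θb ≤ M → (Fb, θb) ∈ Γc := by
    intro Fb θb h1 h2 h3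
    exact ⟨by simpa [Metric.mem_closedBall, dist_zero_right] using h1, ⟨h2, h3⟩⟩
  have hSigbd : ∀ z ∈ Γc, ‖Sig z.1 z.2‖ ≤ C0 :=
    fun z hz => le_trans (hC₁ z hz) (le_trans (le_max_left _ _) (le_max_left _ _))
  have hψbd : ∀ z ∈ Γc, |ψ z.1 z.2| ≤ C0 := by
    intro z hz
    have := hC₂ z hz
    rw [Real.norm_eq_abs] at this
    exact le_trans this (le_trans (le_max_right _ _) (le_max_left _ _))
  -- global sublinear bound on η
  obtain ⟨R₀, hR₀⟩ := ha3 (c / (4 * M)) (by positivity)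
  set rF : ℝ := (max R₀ 1) ^ (1 / p) with hrFdef
  set rθ : ℝ := (max R₀ 1) ^ (1 / q) with hrθdef
  set Kc2 : Set (EuclideanSpace ℝ (Fin d × Fin d) × ℝ) :=
    Metric.closedBall 0 rF ×ˢ Set.Icc 0 rθ with hKc2def
  have hKc2sub : Kc2 ⊆ S := fun z hz => ⟨Set.mem_univ _, hz.2.1⟩
  obtain ⟨Cη', hCη'⟩ := ((isCompact_closedBall _ _).prod
    (isCompact_Icc (a := (0:ℝ)) (b := rθ))).exists_bound_of_continuousOn
    ((hηreg.continuousOn).mono hKc2sub)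
  set Cη : ℝ := max Cη' 0 with hCηdef
  have hCη0 : 0 ≤ Cη := le_max_right _ _
  have hηglob : ∀ F θ, 0 ≤ θ → |η F θ| ≤ c / (4 * M) * (‖F‖ ^ p + θ ^ q) + Cη := by
    intro F θ hθ
    have hX0 : 0 ≤ ‖F‖ ^ p + θ ^ q :=
      add_nonneg (Real.rpow_nonneg (norm_nonneg _) _) (Real.rpow_nonneg hθ _)
    by_cases hX : R₀ ≤ ‖F‖ ^ p + θ ^ q
    · linarith [hR₀ F θ hθ hX]
    · push_neg at hX
      have hXle : ‖F‖ ^ p + θ ^ q ≤ max R₀ 1 := le_trans hX.le (le_max_left _ _)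
      have hθq : (0:ℝ) ≤ θ ^ q := Real.rpow_nonneg hθ _
      have hFp : (0:ℝ) ≤ ‖F‖ ^ p := Real.rpow_nonneg (norm_nonneg _) _
      have hFm : (F, θ) ∈ Kc2 := by
        constructor
        · rw [Metric.mem_closedBall, dist_zero_right]
          exact aux_le_rpow_inv (norm_nonneg _) (by linarith) (by linarith)
        · exact ⟨hθ, aux_le_rpow_inv hθ (by linarith) (by linarith)⟩
      have := hCη' (F, θ) hFm
      rw [Real.norm_eq_abs] at this
      have h2 : 0 ≤ c / (4 * M) * (‖F‖ ^ p + θ ^ q) := by positivity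
      have h3 : Cη' ≤ Cη := le_max_left _ _
      linarith
  -- Young
  obtain ⟨L, hL0, hLy⟩ := aux_young hC0 (show (0:ℝ) < c / 4 by positivity) hp
  -- constants
  have h2p : (0:ℝ) < 2 ^ p := Real.rpow_pos_of_pos (by norm_num) _
  have h2q : (0:ℝ) < 2 ^ q := Real.rpow_pos_of_pos (by norm_num) _
  set Dp : ℝ := 2 ^ p + 2 ^ q with hDpdef
  have hDp : 0 < Dp := by positivity
  set K₁ : ℝ := min 1 (c / (2 * Dp)) with hK₁def
  have hK₁pos : 0 < K₁ := lt_min one_pos (by positivity)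
  have hK₁le1 : K₁ ≤ 1 := min_le_left _ _
  have hK₁le : K₁ ≤ c / (2 * Dp) := min_le_right _ _
  set C₃ : ℝ := (c + M * Cη + C0 + C0 * M + L) + (c / 8) * (M ^ p + M ^ q) with hC₃def
  set κ : ℝ := min (3 * c / 8) (1 / 8 : ℝ) with hκdef
  have hκpos : 0 < κ := lt_min (by positivity) (by norm_num)
  set R : ℝ := max 1 ((C₃ + M ^ 2 / 4) / κ) with hRdef
  have hR1 : 1 ≤ R := le_max_left _ _
  have hRge : (C₃ + M ^ 2 / 4) / κ ≤ R := le_max_right _ _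
  have hκ1 : κ ≤ 3 * c / 8 := min_le_left _ _
  have hκ2 : κ ≤ 1 / 8 := min_le_right _ _
  have hκR : C₃ + M ^ 2 / 4 ≤ κ * R := by
    rw [div_le_iff₀ hκpos] at hRge
    linarith only [hRge]
  clear_value C0 Cη Dp K₁ C₃ κ R
  -- far-field estimate
  have farfield : ∀ (Fb : EuclideanSpace ℝ (Fin d × Fin d))
      (vb : EuclideanSpace ℝ (Fin d)) (θb : ℝ),
      ‖Fb‖ ≤ M → ‖vb‖ ≤ M → δ ≤ θb → θb ≤ M →
      ∀ (F : EuclideanSpace ℝ (Fin d × Fin d)) (v : EuclideanSpace ℝ (Fin d)) (θ : ℝ),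
        0 ≤ θ → R < ‖F‖ ^ p + θ ^ q + ‖v‖ ^ 2 →
        (1/4) * K₁ * (‖F - Fb‖ ^ p + |θ - θb| ^ q + ‖v - vb‖ ^ 2) ≤
          (ψ F θ - ψ Fb θb - ⟪Sig Fb θb, F - Fb⟫ + η Fb θb * (θ - θb))
            + (η F θ - η Fb θb) * (θ - θb) + (1/2) * ‖v - vb‖ ^ 2 := by
    intro Fb vb θb hFb hvb hθb1 hθb2 F v θ hθ hRlt
    have hθb0 : 0 ≤ θb := le_trans hδ.le hθb1
    have hΓm := hΓmem Fb θb hFb hθb1 hθb2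
    have hθq : (0:ℝ) ≤ θ ^ q := Real.rpow_nonneg hθ _
    have hFp : (0:ℝ) ≤ ‖F‖ ^ p := Real.rpow_nonneg (norm_nonneg _) _
    set X : ℝ := ‖F‖ ^ p + θ ^ q with hXdef
    have hX0 : 0 ≤ X := by positivity
    -- lower bound on the energy expression
    have h_e : c * X - c ≤ ψ F θ + θ * η F θ := (ha1 F θ hθ).1
    have hηb : |η F θ| ≤ c / (4 * M) * X + Cη := hηglob F θ hθ
    have hSb : ‖Sig Fb θb‖ ≤ C0 := hSigbd (Fb, θb) hΓm
    have hψb : |ψ Fb θb| ≤ C0 := hψbd (Fb, θb) hΓm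
    have hFX : ‖F‖ ^ p ≤ X := by rw [hXdef]; linarith only [hθq]
    have hinner : |⟪Sig Fb θb, F - Fb⟫| ≤ ‖Sig Fb θb‖ * ‖F - Fb‖ :=
      abs_real_inner_le_norm _ _
    have hFn : ‖F - Fb‖ ≤ ‖F‖ + M :=
      le_trans (norm_sub_le _ _) (by linarith only [hFb])
    have hC0F : C0 * ‖F‖ ≤ c / 4 * ‖F‖ ^ p + L := hLy ‖F‖ (norm_nonneg F)
    clear_value X
    have hMη : θb * η F θ ≤ c / 4 * X + M * Cη := by
      have h1 : θb * η F θ ≤ θb * |η F θ| :=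
        mul_le_mul_of_nonneg_left (le_abs_self _) hθb0
      have h2 : θb * |η F θ| ≤ M * |η F θ| :=
        mul_le_mul_of_nonneg_right hθb2 (abs_nonneg _)
      have h3 : M * |η F θ| ≤ M * (c / (4 * M) * X + Cη) :=
        mul_le_mul_of_nonneg_left hηb hM.le
      have h5 : M * (c / (4 * M) * X + Cη) = c / 4 * X + M * Cη := by
        field_simp
      linarith only [h1, h2, h3, h5.le, h5.ge]
    have hinnerlb : -(c / 4 * X + L + C0 * M) ≤ -⟪Sig Fb θb, F - Fb⟫ := by
      have h1 : ⟪Sig Fb θb, F - Fb⟫ ≤ ‖Sig Fb θb‖ * ‖F - Fb‖ :=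
        le_trans (le_abs_self _) hinner
      have h2 : ‖Sig Fb θb‖ * ‖F - Fb‖ ≤ C0 * (‖F‖ + M) :=
        mul_le_mul hSb hFn (norm_nonneg _) hC0
      have h3 : c / 4 * ‖F‖ ^ p ≤ c / 4 * X :=
        mul_le_mul_of_nonneg_left hFX (by positivity)
      linarith only [h1, h2, h3, hC0F]
    have hA : (c/2) * X - (c + M * Cη + C0 + C0 * M + L) + (1/2) * ‖v - vb‖ ^ 2 ≤
        (ψ F θ - ψ Fb θb - ⟪Sig Fb θb, F - Fb⟫ + η Fb θb * (θ - θb))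
          + (η F θ - η Fb θb) * (θ - θb) + (1/2) * ‖v - vb‖ ^ 2 := by
      have hid : (ψ F θ - ψ Fb θb - ⟪Sig Fb θb, F - Fb⟫ + η Fb θb * (θ - θb))
          + (η F θ - η Fb θb) * (θ - θb) + (1/2) * ‖v - vb‖ ^ 2
          = (ψ F θ + θ * η F θ) - θb * η F θ - ψ Fb θb - ⟪Sig Fb θb, F - Fb⟫
            + (1/2) * ‖v - vb‖ ^ 2 := by ring
      rw [hid]
      have h4 : -C0 ≤ -ψ Fb θb := by linarith only [(abs_le.mp hψb).2]
      linarith only [h_e, hMη, h4, hinnerlb, hXdef.le, hXdef.ge]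
    -- upper bound on the target
    have hvv : (0:ℝ) ≤ ‖v - vb‖ ^ 2 := sq_nonneg _
    have hMp : (0:ℝ) ≤ M ^ p := Real.rpow_nonneg hM.le _
    have hMq : (0:ℝ) ≤ M ^ q := Real.rpow_nonneg hM.le _
    have hT : (1/4) * K₁ * (‖F - Fb‖ ^ p + |θ - θb| ^ q + ‖v - vb‖ ^ 2) ≤
        (c/8) * ‖F‖ ^ p + (c/8) * θ ^ q + (c/8) * (M ^ p + M ^ q)
          + (1/4) * ‖v - vb‖ ^ 2 := by
      have h1 : ‖F - Fb‖ ^ p ≤ 2 ^ p * (‖F‖ ^ p + M ^ p) := by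
        calc ‖F - Fb‖ ^ p ≤ (‖F‖ + M) ^ p :=
              Real.rpow_le_rpow (norm_nonneg _) hFn (by linarith only [hp])
          _ ≤ 2 ^ p * (‖F‖ ^ p + M ^ p) :=
              aux_rpow_add (norm_nonneg _) hM.le (by linarith only [hp])
      have h2 : |θ - θb| ^ q ≤ 2 ^ q * (θ ^ q + M ^ q) := by
        have habs : |θ - θb| ≤ θ + M := by
          rw [abs_sub_le_iff]
          constructor <;> linarith only [hθ, hθb0, hθb2]
        calc |θ - θb| ^ q ≤ (θ + M) ^ q :=
              Real.rpow_le_rpow (abs_nonneg _) habs (by linarith only [hq])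
          _ ≤ 2 ^ q * (θ ^ q + M ^ q) := aux_rpow_add hθ hM.le (by linarith only [hq])
      have hKp : (1/4) * K₁ * 2 ^ p ≤ c / 8 := by
        have h3 : K₁ * 2 ^ p ≤ (c / (2 * Dp)) * Dp := by
          have := mul_le_mul hK₁le (le_add_of_nonneg_right h2q.le) h2p.le
            (by positivity : (0:ℝ) ≤ c / (2 * Dp))
          simpa [hDpdef] using this
        have h4 : (c / (2 * Dp)) * Dp = c / 2 := by field_simp
        linarith only [h3, h4.le, h4.ge]
      have hKq : (1/4) * K₁ * 2 ^ q ≤ c / 8 := by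
        have h3 : K₁ * 2 ^ q ≤ (c / (2 * Dp)) * Dp := by
          have := mul_le_mul hK₁le (le_add_of_nonneg_left h2p.le) h2q.le
            (by positivity : (0:ℝ) ≤ c / (2 * Dp))
          simpa [hDpdef] using this
        have h4 : (c / (2 * Dp)) * Dp = c / 2 := by field_simp
        linarith only [h3, h4.le, h4.ge]
      have t1 : (1/4) * K₁ * ‖F - Fb‖ ^ p ≤ (1/4) * K₁ * (2 ^ p * (‖F‖ ^ p + M ^ p)) :=
        mul_le_mul_of_nonneg_left h1 (by positivity)
      have t2 : (1/4) * K₁ * 2 ^ p * (‖F‖ ^ p + M ^ p) ≤ (c/8) * (‖F‖ ^ p + M ^ p) :=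
        mul_le_mul_of_nonneg_right hKp (add_nonneg hFp hMp)
      have t1' : (1/4) * K₁ * |θ - θb| ^ q ≤ (1/4) * K₁ * (2 ^ q * (θ ^ q + M ^ q)) :=
        mul_le_mul_of_nonneg_left h2 (by positivity)
      have t2' : (1/4) * K₁ * 2 ^ q * (θ ^ q + M ^ q) ≤ (c/8) * (θ ^ q + M ^ q) :=
        mul_le_mul_of_nonneg_right hKq (add_nonneg hθq hMq)
      have t3 : K₁ * ‖v - vb‖ ^ 2 ≤ 1 * ‖v - vb‖ ^ 2 :=
        mul_le_mul_of_nonneg_right hK₁le1 hvv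
      nlinarith only [t1, t2, t1', t2', t3]
    -- conclude
    have hv2 : (1/2) * ‖v‖ ^ 2 - M ^ 2 ≤ ‖v - vb‖ ^ 2 := by
      have h1 : ‖v‖ ≤ ‖v - vb‖ + M := by
        calc ‖v‖ = ‖(v - vb) + vb‖ := by rw [sub_add_cancel]
          _ ≤ ‖v - vb‖ + ‖vb‖ := norm_add_le _ _
          _ ≤ ‖v - vb‖ + M := by linarith only [hvb]
      nlinarith only [h1, norm_nonneg (v - vb), norm_nonneg v, hM.le,
        sq_nonneg (‖v - vb‖ - M)]
    have hvsq : (0:ℝ) ≤ ‖v‖ ^ 2 := sq_nonneg _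
    have hfinal : C₃ ≤ (3 * c / 8) * X + (1/4) * ‖v - vb‖ ^ 2 := by
      have t4 : κ * R < κ * (X + ‖v‖ ^ 2) := by
        exact mul_lt_mul_of_pos_left hRlt hκpos
      have t5 : κ * X ≤ (3 * c / 8) * X := mul_le_mul_of_nonneg_right hκ1 hX0
      have t6 : κ * ‖v‖ ^ 2 ≤ (1/8) * ‖v‖ ^ 2 := mul_le_mul_of_nonneg_right hκ2 hvsq
      linarith only [hκR, t4, t5, t6, hv2, hXdef.le, hXdef.ge]
    have hC₃eq : C₃ = c + M * Cη + C0 + C0 * M + L + c / 8 * (M ^ p + M ^ q) := hC₃def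
    have hcX : (c/8) * X = (c/8) * ‖F‖ ^ p + (c/8) * θ ^ q := by rw [hXdef]; ring
    calc (1/4) * K₁ * (‖F - Fb‖ ^ p + |θ - θb| ^ q + ‖v - vb‖ ^ 2)
        ≤ (c/8) * ‖F‖ ^ p + (c/8) * θ ^ q + (c/8) * (M ^ p + M ^ q)
            + (1/4) * ‖v - vb‖ ^ 2 := hT
      _ ≤ (c/2) * X - (c + M * Cη + C0 + C0 * M + L) + (1/2) * ‖v - vb‖ ^ 2 := by
          linarith only [hfinal, hC₃eq.le, hC₃eq.ge, hcX.le, hcX.ge]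
      _ ≤ _ := hA
  -- the compact box
  set B : ℝ := max (M + 1) (max (R ^ (1 / p)) (R ^ (1 / q))) with hBdef
  have hBM : M ≤ B := le_trans (by linarith) (le_max_left _ _)
  have hB0 : (0 : ℝ) ≤ B := le_trans (by linarith) hBM
  have hBp : R ^ (1 / p) ≤ B := le_trans (le_max_left _ _) (le_max_right _ _)
  have hBq : R ^ (1 / q) ≤ B := le_trans (le_max_right _ _) (le_max_right _ _)
  set Kc : Set (EuclideanSpace ℝ (Fin d × Fin d) × ℝ) :=
    Metric.closedBall 0 B ×ˢ Set.Icc 0 B with hKcdef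
  have hKcsub : Kc ⊆ S := fun z hz => ⟨Set.mem_univ _, hz.2.1⟩
  have hKccomp : IsCompact Kc := (isCompact_closedBall _ _).prod isCompact_Icc
  have hKcmem : ∀ (Fx : EuclideanSpace ℝ (Fin d × Fin d)) (θ : ℝ),
      ‖Fx‖ ≤ B → 0 ≤ θ → θ ≤ B → (Fx, θ) ∈ Kc := by
    intro Fx θ h1 h2 h3
    exact ⟨by simpa [Metric.mem_closedBall, dist_zero_right] using h1, ⟨h2, h3⟩⟩
  have hKcne : ((0 : EuclideanSpace ℝ (Fin d × Fin d)), (0:ℝ)) ∈ Kc :=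
    hKcmem 0 0 (by simpa using hB0) le_rfl hB0
  -- μ₁ : uniform positive lower bound for η_θ on Kc
  obtain ⟨z₁, hz₁K, hz₁min⟩ := hKccomp.exists_isMinOn ⟨_, hKcne⟩ (hmcont.mono hKcsub)
  set μ₁ : ℝ := mfun z₁ with hμ₁def
  have hμ₁pos : 0 < μ₁ := hmpos z₁ (hKcsub hz₁K)
  have hμ₁le : ∀ z ∈ Kc, μ₁ ≤ mfun z := fun z hz => isMinOn_iff.mp hz₁min z hz
  -- μ₂ : uniform coercivity of the Hessian on Kc
  obtain ⟨μ₂, hμ₂pos, hμ₂⟩ : ∃ μ₂, 0 < μ₂ ∧ ∀ z ∈ Kc,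
      ∀ V : EuclideanSpace ℝ (Fin d × Fin d), μ₂ * ‖V‖ ^ 2 ≤ Qf z V := by
    rcases Nat.eq_zero_or_pos d with hd | hd
    · refine ⟨1, one_pos, fun z hz V => ?_⟩
      subst hd
      have hV0 : V = 0 := Subsingleton.elim V 0
      subst hV0
      have : ((0 : EuclideanSpace ℝ (Fin 0 × Fin 0)), (0:ℝ)) =
          (0 : EuclideanSpace ℝ (Fin 0 × Fin 0) × ℝ) := rfl
      simp [hQfdef, this]
    · have i₀ : Fin d × Fin d := ⟨⟨0, hd⟩, ⟨0, hd⟩⟩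
      set v₀ : EuclideanSpace ℝ (Fin d × Fin d) := EuclideanSpace.single i₀ (1:ℝ) with hv₀def
      have hv₀ : ‖v₀‖ = 1 := by rw [hv₀def, EuclideanSpace.norm_single]; norm_num
      have hv₀s : v₀ ∈ Metric.sphere (0 : EuclideanSpace ℝ (Fin d × Fin d)) 1 :=
        mem_sphere_zero_iff_norm.mpr hv₀
      have hKS : IsCompact (Kc ×ˢ Metric.sphere (0 : EuclideanSpace ℝ (Fin d × Fin d)) 1) :=
        hKccomp.prod (isCompact_sphere _ _)
      obtain ⟨w₀, hw₀K, hw₀min⟩ := hKS.exists_isMinOn ⟨((0,0), v₀), ⟨hKcne, hv₀s⟩⟩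
        (hQcont.mono (Set.prod_mono hKcsub (Set.subset_univ _)))
      have hw₀minI := isMinOn_iff.mp hw₀min
      refine ⟨Qf w₀.1 w₀.2, ?_, ?_⟩
      · have hw1S := hKcsub hw₀K.1
        have hVn : ‖w₀.2‖ = 1 := mem_sphere_zero_iff_norm.mp hw₀K.2
        have hVne : w₀.2 ≠ 0 := by
          intro h; rw [h] at hVn; simp at hVn
        have h5 := hGibbsF w₀.1.1 w₀.1.2 hw1S.2 w₀.2 hVne
        exact lt_of_lt_of_eq h5 (hfd2 w₀.1.2 hw1S.2 w₀.1.1 w₀.2)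
      · intro z hz V
        rcases eq_or_ne V 0 with hV | hV
        · subst hV
          have h0 : Qf z 0 = 0 := by
            have : ((0 : EuclideanSpace ℝ (Fin d × Fin d)), (0:ℝ)) =
                (0 : EuclideanSpace ℝ (Fin d × Fin d) × ℝ) := rfl
            simp [hQfdef, this]
          rw [h0]; simp
        · have ha : (0:ℝ) < ‖V‖ := norm_pos_iff.mpr hV
          set W : EuclideanSpace ℝ (Fin d × Fin d) := ‖V‖⁻¹ • V with hWdef
          have hW : ‖W‖ = 1 := by
            rw [hWdef, norm_smul, norm_inv, norm_norm, inv_mul_cancel₀ ha.ne']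
          have hVW : V = ‖V‖ • W := by
            rw [hWdef, smul_smul, mul_inv_cancel₀ ha.ne', one_smul]
          have hmin : Qf w₀.1 w₀.2 ≤ Qf z W :=
            hw₀minI (z, W) ⟨hz, mem_sphere_zero_iff_norm.mpr hW⟩
          have hscale : Qf z V = ‖V‖ ^ 2 * Qf z W := by
            have h1 : ((V : EuclideanSpace ℝ (Fin d × Fin d)), (0:ℝ)) =
                ‖V‖ • ((W : EuclideanSpace ℝ (Fin d × Fin d)), (0:ℝ)) := by
              rw [Prod.smul_mk, smul_zero, ← hVW]
            show Ψ₂ z (V, 0) (V, 0) = ‖V‖ ^ 2 * (Ψ₂ z (W, 0) (W, 0))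
            rw [h1]
            simp only [_root_.map_smul, ContinuousLinearMap.smul_apply, smul_eq_mul]
            ring
          have h2 := mul_le_mul_of_nonneg_left hmin (by positivity : (0:ℝ) ≤ ‖V‖ ^ 2)
          rw [hscale]
          linarith only [h2]
  -- near-field estimate
  have nearfield : ∀ (Fb : EuclideanSpace ℝ (Fin d × Fin d))
      (vb : EuclideanSpace ℝ (Fin d)) (θb : ℝ),
      ‖Fb‖ ≤ M → ‖vb‖ ≤ M → δ ≤ θb → θb ≤ M →
      ∀ (F : EuclideanSpace ℝ (Fin d × Fin d)) (v : EuclideanSpace ℝ (Fin d)) (θ : ℝ),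
        0 ≤ θ → ‖F‖ ^ p + θ ^ q + ‖v‖ ^ 2 ≤ R →
        (min (μ₂/2) (min (μ₁/2) (1/2:ℝ))) * (‖F - Fb‖ ^ 2 + |θ - θb| ^ 2 + ‖v - vb‖ ^ 2) ≤
          (ψ F θ - ψ Fb θb - ⟪Sig Fb θb, F - Fb⟫ + η Fb θb * (θ - θb))
            + (η F θ - η Fb θb) * (θ - θb) + (1/2) * ‖v - vb‖ ^ 2 := by
    intro Fb vb θb hFb hvb hθb1 hθb2 F v θ hθ hle
    have hθb0 : (0:ℝ) ≤ θb := le_trans hδ.le hθb1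
    have hθq : (0:ℝ) ≤ θ ^ q := Real.rpow_nonneg hθ _
    have hFp : (0:ℝ) ≤ ‖F‖ ^ p := Real.rpow_nonneg (norm_nonneg _) _
    have hv2 : (0:ℝ) ≤ ‖v‖ ^ 2 := sq_nonneg _
    have hFB : ‖F‖ ≤ B :=
      le_trans (aux_le_rpow_inv (norm_nonneg _) (by linarith) (by linarith)) hBp
    have hθB : θ ≤ B :=
      le_trans (aux_le_rpow_inv hθ (by linarith) (by linarith)) hBq
    have hFbB : ‖Fb‖ ≤ B := le_trans hFb hBM
    have hθbB : θb ≤ B := le_trans hθb2 hBM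
    -- θ-part
    have hθpart : μ₁/2 * (θ - θb)^2 ≤ ψ F θ - ψ F θb + η F θ * (θ - θb) := by
      have hψcont : ContinuousOn (fun s => ψ F s) (Set.Icc 0 B) :=
        hψreg.continuousOn.comp
          ((continuous_const.prodMk continuous_id).continuousOn)
          (fun s hs => hmemS F s hs.1)
      have hηcont : ContinuousOn (fun s => η F s) (Set.Icc 0 B) :=
        hηreg.continuousOn.comp
          ((continuous_const.prodMk continuous_id).continuousOn)
          (fun s hs => hmemS F s hs.1)
      have hGcont : ContinuousOn (fun s => ψ F s - ψ F θb + η F s * (s - θb)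
          - μ₁/2 * (s - θb)^2) (Set.Icc 0 B) := by
        refine ((hψcont.sub continuousOn_const).add
          (hηcont.mul ((continuous_id.sub continuous_const).continuousOn))).sub ?_
        exact (continuous_const.mul
          ((continuous_id.sub continuous_const).pow 2)).continuousOn
      have hGderiv : ∀ s ∈ Set.Ioo (0:ℝ) B, HasDerivAt
          (fun s => ψ F s - ψ F θb + η F s * (s - θb) - μ₁/2 * (s - θb)^2)
          ((mfun (F, s) - μ₁) * (s - θb)) s := by
        intro s hs
        have hnh : S ∈ 𝓝 ((F, s) : EuclideanSpace ℝ (Fin d × Fin d) × ℝ) := by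
          refine Filter.mem_of_superset
            ((isOpen_univ.prod isOpen_Ioi).mem_nhds ⟨Set.mem_univ _, hs.1⟩) ?_
          rw [hSdef]
          exact Set.prod_mono subset_rfl Set.Ioi_subset_Ici_self
        have hψAt : ContDiffAt ℝ 3 Ψ (F, s) := hψreg.contDiffAt hnh
        have hψsl : ContDiffAt ℝ 3 (fun t : ℝ => ψ F t) s :=
          hψAt.comp s (contDiffAt_const.prodMk contDiffAt_id)
        have hψdiff : DifferentiableAt ℝ (fun t : ℝ => ψ F t) s :=
          hψsl.differentiableAt (by norm_num)
        have h₁ : HasDerivAt (fun t : ℝ => ψ F t) (-η F s) s := by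
          have h := hψdiff.hasDerivAt
          rwa [show deriv (fun t : ℝ => ψ F t) s = -η F s from by
            rw [hconstη F s hs.1.le, neg_neg]] at h
        have h₂ : HasDerivAt (fun t : ℝ => η F t) (mfun (F, s)) s := by
          have h := (hdiffη F s hs.1.le).hasDerivAt
          rwa [hmeq F s hs.1.le] at h
        have h₃ : HasDerivAt (fun t : ℝ => η F t * (t - θb))
            (mfun (F, s) * (s - θb) + η F s * 1) s :=
          h₂.mul ((hasDerivAt_id s).sub_const θb)
        have h₄ : HasDerivAt (fun t : ℝ => (t - θb)^2)
            ((2:ℕ) * (s - θb) ^ (2-1) * 1) s :=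
          ((hasDerivAt_id s).sub_const θb).pow 2
        have h₅ := ((h₁.sub_const (ψ F θb)).add h₃).sub (h₄.const_mul (μ₁/2))
        refine h₅.congr_deriv ?_
        push_cast
        ring
      have hsign : ∀ s ∈ Set.Ioo (0:ℝ) B,
          0 ≤ ((mfun (F, s) - μ₁) * (s - θb)) * (s - θb) := by
        intro s hs
        have hm : μ₁ ≤ mfun (F, s) :=
          hμ₁le (F, s) (hKcmem F s hFB hs.1.le hs.2.le)
        nlinarith only [hm, sq_nonneg (s - θb)]
      have hmin := aux_min_at hGcont hGderiv hsign ⟨hθb0, hθbB⟩ θ ⟨hθ, hθB⟩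
      linarith only [hmin]
    -- F-part
    set V : EuclideanSpace ℝ (Fin d × Fin d) := F - Fb with hVdef
    have hFpart : μ₂/2 * ‖V‖^2 ≤ ψ F θb - ψ Fb θb - ⟪Sig Fb θb, V⟫ := by
      have hγ : ∀ t : ℝ, HasDerivAt (fun t : ℝ => Fb + t • V) V t := by
        intro t
        have h := ((hasDerivAt_id t).smul_const V).const_add Fb
        simpa using h
      have hseg : ∀ t ∈ Set.Icc (0:ℝ) 1, ‖Fb + t • V‖ ≤ B := by
        intro t ht
        have hcomb : Fb + t • V = (1 - t) • Fb + t • F := by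
          rw [hVdef, smul_sub, sub_smul, one_smul]
          abel
        rw [hcomb]
        have h1 : ‖(1 - t) • Fb + t • F‖ ≤ ‖(1 - t) • Fb‖ + ‖t • F‖ := norm_add_le _ _
        rw [norm_smul, norm_smul, Real.norm_eq_abs, Real.norm_eq_abs,
          abs_of_nonneg (by linarith [ht.2] : (0:ℝ) ≤ 1 - t), abs_of_nonneg ht.1] at h1
        nlinarith only [h1, hFbB, hFB, ht.1, ht.2, norm_nonneg Fb, norm_nonneg F, hB0]
      have hmemseg : ∀ t : ℝ, ((Fb + t • V, θb) :
          EuclideanSpace ℝ (Fin d × Fin d) × ℝ) ∈ S :=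
        fun t => hmemS _ θb hθb0
      -- derivative of t ↦ Ψ₁(γ t, θb) (V,0)
      have heval : ∀ t : ℝ, HasDerivAt (fun t : ℝ => Ψ₁ (Fb + t • V, θb) (V, 0))
          (Qf (Fb + t • V, θb) V) t := by
        intro t
        have hpath : HasDerivAt (fun t : ℝ => ((Fb + t • V, θb) :
            EuclideanSpace ℝ (Fin d × Fin d) × ℝ)) (V, (0:ℝ)) t :=
          (hγ t).prodMk (hasDerivAt_const t θb)
        have hΨ₁d : HasFDerivWithinAt Ψ₁ (Ψ₂ (Fb + t • V, θb)) S (Fb + t • V, θb) :=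
          ((hΨ₁reg.differentiableOn (by norm_num)) _ (hmemseg t)).hasFDerivWithinAt
        have h1 : HasDerivWithinAt (fun t : ℝ => Ψ₁ (Fb + t • V, θb))
            (Ψ₂ (Fb + t • V, θb) (V, 0)) Set.univ t :=
          hΨ₁d.comp_hasDerivWithinAt t (hpath.hasDerivWithinAt)
            (fun x _ => hmemseg x)
        rw [hasDerivWithinAt_univ] at h1
        exact ((ContinuousLinearMap.apply ℝ ℝ
          (((V : EuclideanSpace ℝ (Fin d × Fin d)), (0:ℝ)))).hasFDerivAt).comp_hasDerivAt t h1
      -- Φ₁ and its properties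
      set Φ₁ : ℝ → ℝ := fun t => Ψ₁ (Fb + t • V, θb) (V, 0) - ⟪Sig Fb θb, V⟫
        - μ₂ * ‖V‖^2 * t with hΦ₁def
      have hΦ₁deriv : ∀ t : ℝ, HasDerivAt Φ₁ (Qf (Fb + t • V, θb) V - μ₂ * ‖V‖^2) t := by
        intro t
        have h1 := ((heval t).sub_const (⟪Sig Fb θb, V⟫)).sub
          ((hasDerivAt_id t).const_mul (μ₂ * ‖V‖^2))
        refine h1.congr_deriv ?_
        ring
      have hΦ₁0 : Φ₁ 0 = 0 := by
        have hSig0 : ⟪Sig Fb θb, V⟫ = Ψ₁ (Fb, θb) (V, 0) := by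
          rw [hconstSig Fb θb hθb0 V, hfd1' θb hθb0 Fb]; rfl
        rw [hΦ₁def]
        simp [hSig0]
      have hΦ₁mono : MonotoneOn Φ₁ (Set.Icc 0 1) := by
        apply monotoneOn_of_deriv_nonneg (convex_Icc 0 1)
        · exact (fun t _ => (hΦ₁deriv t).differentiableAt.continuousAt.continuousWithinAt)
        · intro t ht
          exact (hΦ₁deriv t).differentiableAt.differentiableWithinAt
        · intro t ht
          rw [interior_Icc] at ht
          rw [(hΦ₁deriv t).deriv]
          have hm := hμ₂ (Fb + t • V, θb)
            (hKcmem _ θb (hseg t ⟨ht.1.le, ht.2.le⟩) hθb0 hθbB) V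
          linarith only [hm]
      have hΦ₁nonneg : ∀ t ∈ Set.Icc (0:ℝ) 1, 0 ≤ Φ₁ t := by
        intro t ht
        have := hΦ₁mono (Set.left_mem_Icc.mpr zero_le_one) ht ht.1
        rwa [hΦ₁0] at this
      -- Φ and its monotonicity
      set Φ : ℝ → ℝ := fun t => ψ (Fb + t • V) θb - t * ⟪Sig Fb θb, V⟫
        - μ₂/2 * ‖V‖^2 * t^2 with hΦdef
      have hΦderiv : ∀ t : ℝ, HasDerivAt Φ (Φ₁ t) t := by
        intro t
        have h1 : HasDerivAt (fun t : ℝ => ψ (Fb + t • V) θb)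
            (Ψ₁ (Fb + t • V, θb) (V, 0)) t := by
          have h := (hfd1 θb hθb0 (Fb + t • V)).comp_hasDerivAt t (hγ t)
          exact h
        have h2 := (h1.sub ((hasDerivAt_id t).mul_const (⟪Sig Fb θb, V⟫))).sub
          (((hasDerivAt_pow 2 t)).const_mul (μ₂/2 * ‖V‖^2))
        refine h2.congr_deriv ?_
        push_cast
        rw [hΦ₁def]
        ring
      have hΦmono : MonotoneOn Φ (Set.Icc 0 1) := by
        apply monotoneOn_of_deriv_nonneg (convex_Icc 0 1)
        · exact (fun t _ => (hΦderiv t).differentiableAt.continuousAt.continuousWithinAt)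
        · intro t ht
          exact (hΦderiv t).differentiableAt.differentiableWithinAt
        · intro t ht
          rw [interior_Icc] at ht
          rw [(hΦderiv t).deriv]
          exact hΦ₁nonneg t ⟨ht.1.le, ht.2.le⟩
      have hΦ01 := hΦmono (Set.left_mem_Icc.mpr zero_le_one)
        (Set.right_mem_Icc.mpr zero_le_one) zero_le_one
      have hΦ0 : Φ 0 = ψ Fb θb := by rw [hΦdef]; simp
      have hΦ1 : Φ 1 = ψ F θb - ⟪Sig Fb θb, V⟫ - μ₂/2 * ‖V‖^2 := by
        rw [hΦdef]
        simp [hVdef]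
      rw [hΦ0, hΦ1] at hΦ01
      linarith only [hΦ01]
    -- combine
    have hid : (ψ F θ - ψ Fb θb - ⟪Sig Fb θb, V⟫ + η Fb θb * (θ - θb))
        + (η F θ - η Fb θb) * (θ - θb) + (1/2) * ‖v - vb‖ ^ 2
        = (ψ F θb - ψ Fb θb - ⟪Sig Fb θb, V⟫)
          + (ψ F θ - ψ F θb + η F θ * (θ - θb)) + (1/2) * ‖v - vb‖ ^ 2 := by ring
    rw [hid]
    have habs : |θ - θb| ^ 2 = (θ - θb) ^ 2 := sq_abs _
    set K₂ : ℝ := min (μ₂/2) (min (μ₁/2) (1/2:ℝ)) with hK₂def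
    have hK₂a : K₂ ≤ μ₂/2 := min_le_left _ _
    have hK₂b : K₂ ≤ μ₁/2 := le_trans (min_le_right _ _) (min_le_left _ _)
    have hK₂c : K₂ ≤ 1/2 := le_trans (min_le_right _ _) (min_le_right _ _)
    have t1 : K₂ * ‖V‖^2 ≤ μ₂/2 * ‖V‖^2 :=
      mul_le_mul_of_nonneg_right hK₂a (sq_nonneg _)
    have t2 : K₂ * (θ - θb)^2 ≤ μ₁/2 * (θ - θb)^2 :=
      mul_le_mul_of_nonneg_right hK₂b (sq_nonneg _)
    have t3 : K₂ * ‖v - vb‖^2 ≤ 1/2 * ‖v - vb‖^2 :=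
      mul_le_mul_of_nonneg_right hK₂c (sq_nonneg _)
    rw [habs]
    linarith only [t1, t2, t3, hθpart, hFpart]
  refine ⟨R, K₁, hK₁pos, min (μ₂/2) (min (μ₁/2) (1/2:ℝ)),
    lt_min (by positivity) (lt_min (by positivity) (by norm_num)), ?_⟩
  intro Fb vb θb hFb hvb hθb1 hθb2 F v θ hθ
  constructor
  · intro hRlt
    exact farfield Fb vb θb hFb hvb hθb1 hθb2 F v θ hθ hRlt
  · intro hle
    exact nearfield Fb vb θb hFb hvb hθb1 hθb2 F v θ hθ hle
end
end

section
/- Lower bounds for the relative entropy (Lemma A.1, first bound): Let hypotheses (H1), (H2), (H3) and the growth assumptions (A1), (A2), (A3) be satisfied, and let ū ∈ B_M = {u ∈ ℝ^n : |u| ≤ M}. Then there exist R > M and constants c₁, c₂ > 0 depending on M such that η(u|ū) ≥ c₁ |A(u) − A(ū)|² whenever |u| ≤ R and |ū| ≤ M, and η(u|ū) ≥ c₂ η(u) whenever |u| ≥ R and |ū| ≤ M. -/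
open scoped RealInnerProductSpace
open MeasureTheory

noncomputable section

section Aux

variable {n : ℕ}

local notation "E" => EuclideanSpace ℝ (Fin n)

lemma aux_line_hasDerivAt (w ξ : E) (t : ℝ) :
    HasDerivAt (fun t : ℝ => w + t • ξ) ξ t := by
  simpa using ((hasDerivAt_id t).smul_const ξ).const_add w

lemma aux_invFun_hasFDerivAt {A : EuclideanSpace ℝ (Fin n) → EuclideanSpace ℝ (Fin n)}
    (hAreg : ContDiff ℝ 2 A) (hH1 : Function.Bijective A)
    (e : EuclideanSpace ℝ (Fin n) ≃L[ℝ] EuclideanSpace ℝ (Fin n))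
    (u₀ : EuclideanSpace ℝ (Fin n)) (he : (e : E →L[ℝ] E) = fderiv ℝ A u₀) :
    HasFDerivAt (Function.invFun A) ((e.symm : E →L[ℝ] E)) (A u₀) := by
  have hsd : HasStrictFDerivAt A (e : E →L[ℝ] E) u₀ := by
    rw [he]; exact hAreg.hasStrictFDerivAt (by norm_num)
  exact (hsd.to_local_left_inverse
    (Filter.Eventually.of_forall fun x => Function.leftInverse_invFun hH1.1 x)).hasFDerivAt

lemma aux_key_identity {A G : EuclideanSpace ℝ (Fin n) → EuclideanSpace ℝ (Fin n)}
    {η : EuclideanSpace ℝ (Fin n) → ℝ}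
    (hAreg : ContDiff ℝ 2 A) (hηreg : ContDiff ℝ (⊤ : ℕ∞) η)
    (hGreg : ContDiff ℝ (⊤ : ℕ∞) G)
    (hH2η : ∀ w ξ, fderiv ℝ η w ξ = ⟪G w, fderiv ℝ A w ξ⟫)
    (w ξ : E) :
    ⟪fderiv ℝ G w ξ, fderiv ℝ A w ξ⟫
      = iteratedFDeriv ℝ 2 η w ![ξ, ξ] - ⟪G w, iteratedFDeriv ℝ 2 A w ![ξ, ξ]⟫ := by
  have hηd : ContDiff ℝ 1 (fderiv ℝ η) := hηreg.fderiv_right (m := 1) (by norm_cast)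
  have hAd : ContDiff ℝ 1 (fderiv ℝ A) := hAreg.fderiv_right (by norm_num)
  have h1 : HasDerivAt (fun t : ℝ => fderiv ℝ η (w + t • ξ) ξ)
      (iteratedFDeriv ℝ 2 η w ![ξ, ξ]) 0 := by
    have hF : HasFDerivAt (fun w' => fderiv ℝ η w' ξ)
        ((ContinuousLinearMap.apply ℝ ℝ ξ).comp (fderiv ℝ (fderiv ℝ η) w)) w :=
      (ContinuousLinearMap.apply ℝ ℝ ξ).hasFDerivAt.comp w
        ((hηd.differentiable one_ne_zero w).hasFDerivAt)
    have hF' : HasFDerivAt (fun w' => fderiv ℝ η w' ξ)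
        ((ContinuousLinearMap.apply ℝ ℝ ξ).comp (fderiv ℝ (fderiv ℝ η) w))
        (w + (0:ℝ) • ξ) := by simpa using hF
    have := hF'.comp_hasDerivAt 0 (aux_line_hasDerivAt w ξ 0)
    rw [iteratedFDeriv_two_apply]; exact this
  have h2 : HasDerivAt (fun t : ℝ => ⟪G (w + t • ξ), fderiv ℝ A (w + t • ξ) ξ⟫)
      (⟪G w, iteratedFDeriv ℝ 2 A w ![ξ, ξ]⟫ + ⟪fderiv ℝ G w ξ, fderiv ℝ A w ξ⟫) 0 := by
    have hG : HasDerivAt (fun t : ℝ => G (w + t • ξ)) (fderiv ℝ G w ξ) 0 := by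
      have hg0 : HasFDerivAt G (fderiv ℝ G w) (w + (0:ℝ) • ξ) := by
        simpa using ((hGreg.differentiable (by norm_cast) w).hasFDerivAt)
      exact hg0.comp_hasDerivAt 0 (aux_line_hasDerivAt w ξ 0)
    have hFA : HasDerivAt (fun t : ℝ => fderiv ℝ A (w + t • ξ) ξ)
        (iteratedFDeriv ℝ 2 A w ![ξ, ξ]) 0 := by
      have hF : HasFDerivAt (fun w' => fderiv ℝ A w' ξ)
          ((ContinuousLinearMap.apply ℝ (EuclideanSpace ℝ (Fin n)) ξ).comp
            (fderiv ℝ (fderiv ℝ A) w)) w :=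
        (ContinuousLinearMap.apply ℝ (EuclideanSpace ℝ (Fin n)) ξ).hasFDerivAt.comp w
          ((hAd.differentiable one_ne_zero w).hasFDerivAt)
      have hF' : HasFDerivAt (fun w' => fderiv ℝ A w' ξ)
          ((ContinuousLinearMap.apply ℝ (EuclideanSpace ℝ (Fin n)) ξ).comp
            (fderiv ℝ (fderiv ℝ A) w)) (w + (0:ℝ) • ξ) := by simpa using hF
      have := hF'.comp_hasDerivAt 0 (aux_line_hasDerivAt w ξ 0)
      rw [iteratedFDeriv_two_apply]; exact this
    have := hG.inner ℝ hFA
    simpa using this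
  have heq : (fun t : ℝ => fderiv ℝ η (w + t • ξ) ξ)
      = fun t : ℝ => ⟪G (w + t • ξ), fderiv ℝ A (w + t • ξ) ξ⟫ := by
    funext t; exact hH2η _ ξ
  rw [heq] at h1
  have := h1.unique h2
  linarith [this]

end Aux

set_option maxHeartbeats 1000000 in

/-- **Lemma A.1, first bound (lower bounds for the relative entropy).**
Under hypotheses (H1), (H2), (H3) and the growth assumptions (A1), (A2), (A3),
for `ū ∈ B_M` there exist `R > M` and constants `c₁, c₂ > 0` (depending on `M`)
such that `η(u|ū) ≥ c₁ |A(u) − A(ū)|²` for `|u| ≤ R`, and `η(u|ū) ≥ c₂ η(u)` for `|u| ≥ R`,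
where `η(u|ū) = η(u) − η(ū) − G(ū)·(A(u) − A(ū))`. -/
theorem relative_entropy_lower_bounds
    (n d : ℕ) (p : ℝ) (hp : 1 < p)
    (A : EuclideanSpace ℝ (Fin n) → EuclideanSpace ℝ (Fin n))
    (F : Fin d → EuclideanSpace ℝ (Fin n) → EuclideanSpace ℝ (Fin n))
    (η : EuclideanSpace ℝ (Fin n) → ℝ)
    (q : Fin d → EuclideanSpace ℝ (Fin n) → ℝ)
    (G : EuclideanSpace ℝ (Fin n) → EuclideanSpace ℝ (Fin n))
    -- smoothness of the constitutive functions
    (hAreg : ContDiff ℝ 2 A) (hFreg : ∀ α, ContDiff ℝ (⊤ : ℕ∞) (F α))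
    (hηreg : ContDiff ℝ (⊤ : ℕ∞) η) (hqreg : ∀ α, ContDiff ℝ (⊤ : ℕ∞) (q α))
    (hGreg : ContDiff ℝ (⊤ : ℕ∞) G)
    -- (H1): A is globally invertible with nonsingular differential
    (hH1 : Function.Bijective A)
    (hH1' : ∀ w, Function.Bijective (fderiv ℝ A w))
    -- (H2): entropy pair with multiplier G
    (hH2η : ∀ w ξ, fderiv ℝ η w ξ = ⟪G w, fderiv ℝ A w ξ⟫)
    (hH2q : ∀ α w ξ, fderiv ℝ (q α) w ξ = ⟪G w, fderiv ℝ (F α) w ξ⟫)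
    -- (H3): ∇²η(u) − G(u)·∇²A(u) is positive definite
    (hH3 : ∀ w (ξ : EuclideanSpace ℝ (Fin n)), ξ ≠ 0 →
      0 < iteratedFDeriv ℝ 2 η w ![ξ, ξ] - ⟪G w, iteratedFDeriv ℝ 2 A w ![ξ, ξ]⟫)
    -- (A1): growth of the entropy
    (β₁ β₂ B : ℝ) (hβ₁ : 0 < β₁) (hβ₂ : 0 < β₂) (hB : 0 < B)
    (hA1 : ∀ w : EuclideanSpace ℝ (Fin n),
      β₁ * (‖w‖ ^ p + 1) - B ≤ η w ∧ η w ≤ β₂ * (‖w‖ ^ p + 1))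
    -- (A2): |F_α(u)|/η(u) = o(1) as |u| → ∞
    (hA2 : ∀ α, ∀ ε > (0:ℝ), ∃ R₀, ∀ w : EuclideanSpace ℝ (Fin n),
      R₀ ≤ ‖w‖ → ‖F α w‖ ≤ ε * η w)
    -- (A3): |A(u)|/η(u) = o(1) as |u| → ∞
    (hA3 : ∀ ε > (0:ℝ), ∃ R₀, ∀ w : EuclideanSpace ℝ (Fin n),
      R₀ ≤ ‖w‖ → ‖A w‖ ≤ ε * η w)
    (M : ℝ) (hM : 0 < M) :
    ∃ R > M, ∃ c₁ > (0:ℝ), ∃ c₂ > (0:ℝ),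
      ∀ u ubar : EuclideanSpace ℝ (Fin n), ‖ubar‖ ≤ M →
        (‖u‖ ≤ R →
          c₁ * ‖A u - A ubar‖ ^ 2 ≤ η u - η ubar - ⟪G ubar, A u - A ubar⟫) ∧
        (R ≤ ‖u‖ →
          c₂ * η u ≤ η u - η ubar - ⟪G ubar, A u - A ubar⟫) := by
  classical
  by_cases hn : n = 0
  · -- degenerate case : the space is a singleton
    subst hn
    have hzero : ∀ v : EuclideanSpace ℝ (Fin 0), v = 0 := fun v => by ext i; exact i.elim0
    refine ⟨M + 1, by linarith, 1, one_pos, 1, one_pos, ?_⟩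
    intro u ubar _
    have huu : u = ubar := by rw [hzero u, hzero ubar]
    constructor
    · intro _
      rw [huu]
      simp
    · intro hR
      have h0 : ‖u‖ = 0 := by rw [hzero u]; simp
      rw [h0] at hR
      linarith
  -- main case : n ≠ 0
  haveI hNT : Nontrivial (EuclideanSpace ℝ (Fin n)) := by
    refine ⟨EuclideanSpace.single ⟨0, Nat.pos_of_ne_zero hn⟩ (1:ℝ), 0, ?_⟩
    intro h
    have := congrArg (fun v : EuclideanSpace ℝ (Fin n) => v ⟨0, Nat.pos_of_ne_zero hn⟩) h
    simp [EuclideanSpace.single_apply] at this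
  -- the differential of A as a continuous linear equivalence
  obtain ⟨e, he⟩ : ∃ e : EuclideanSpace ℝ (Fin n) →
      (EuclideanSpace ℝ (Fin n) ≃L[ℝ] EuclideanSpace ℝ (Fin n)),
      ∀ w, ((e w : EuclideanSpace ℝ (Fin n) →L[ℝ] EuclideanSpace ℝ (Fin n)))
        = fderiv ℝ A w := by
    refine ⟨fun w => (LinearEquiv.ofBijective
      (↑(fderiv ℝ A w) : EuclideanSpace ℝ (Fin n) →ₗ[ℝ] EuclideanSpace ℝ (Fin n))
      (hH1' w)).toContinuousLinearEquiv, fun w => ?_⟩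
    ext ξ; rfl
  have hinv : ∀ u₀, HasFDerivAt (Function.invFun A)
      (((e u₀).symm : EuclideanSpace ℝ (Fin n) →L[ℝ] EuclideanSpace ℝ (Fin n))) (A u₀) :=
    fun u₀ => aux_invFun_hasFDerivAt hAreg hH1 (e u₀) u₀ (he u₀)
  have hinvc : Continuous (Function.invFun A) := by
    rw [continuous_iff_continuousAt]
    intro v
    obtain ⟨u₀, rfl⟩ := hH1.2 v
    exact (hinv u₀).differentiableAt.continuousAt
  -- positivity of the quadratic form ⟪DG ξ, ∇A ξ⟫
  have hQpos : ∀ w (ξ : EuclideanSpace ℝ (Fin n)), ξ ≠ 0 →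
      0 < ⟪fderiv ℝ G w ξ, fderiv ℝ A w ξ⟫ := by
    intro w ξ hξ
    rw [aux_key_identity hAreg hηreg hGreg hH2η w ξ]
    exact hH3 w ξ hξ
  -- constants on the ball of radius M
  obtain ⟨CG, hCG⟩ := (isCompact_closedBall (0:EuclideanSpace ℝ (Fin n)) M)
    |>.exists_bound_of_continuousOn hGreg.continuous.continuousOn
  obtain ⟨CA, hCA⟩ := (isCompact_closedBall (0:EuclideanSpace ℝ (Fin n)) M)
    |>.exists_bound_of_continuousOn hAreg.continuous.continuousOn
  obtain ⟨Cη, hCη⟩ := (isCompact_closedBall (0:EuclideanSpace ℝ (Fin n)) M)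
    |>.exists_bound_of_continuousOn hηreg.continuous.continuousOn
  set CG' := max CG 1 with hCG'_def
  set CA' := max CA 0 with hCA'_def
  set Cη' := max Cη 0 with hCη'_def
  have hCG'pos : (0:ℝ) < CG' := lt_of_lt_of_le one_pos (le_max_right _ _)
  have hCA'nn : (0:ℝ) ≤ CA' := le_max_right _ _
  have hCη'nn : (0:ℝ) ≤ Cη' := le_max_right _ _
  obtain ⟨R₀, hR₀⟩ := hA3 (1/(2*CG')) (by positivity)
  set T : ℝ := 4*(Cη' + CG'*CA') + 4 with hT_def
  have hTpos : (0:ℝ) < T := by positivity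
  set R : ℝ := max (max (M+1) R₀) (max 1 ((T+B)/β₁)) with hR_def
  have hRM : M < R := lt_of_lt_of_le (by linarith)
    (le_trans (le_max_left (M+1) R₀) (le_max_left _ _))
  have hR1 : (1:ℝ) ≤ R := le_trans (le_max_left 1 ((T+B)/β₁)) (le_max_right _ _)
  have hRR₀ : R₀ ≤ R := le_trans (le_max_right (M+1) R₀) (le_max_left _ _)
  have hRT : (T+B)/β₁ ≤ R := le_trans (le_max_right 1 ((T+B)/β₁)) (le_max_right _ _)
  -- compact sets for the first bound
  obtain ⟨CAR, hCAR⟩ := (isCompact_closedBall (0:EuclideanSpace ℝ (Fin n)) R)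
    |>.exists_bound_of_continuousOn hAreg.continuous.continuousOn
  set rV : ℝ := max CAR 0 with hrV_def
  set V : Set (EuclideanSpace ℝ (Fin n)) := Metric.closedBall 0 rV with hV_def
  have hVA : ∀ w : EuclideanSpace ℝ (Fin n), ‖w‖ ≤ R → A w ∈ V := by
    intro w hw
    rw [hV_def, mem_closedBall_zero_iff]
    exact le_trans (hCAR w (by rwa [Metric.mem_closedBall, dist_zero_right])) (le_max_left _ _)
  set K : Set (EuclideanSpace ℝ (Fin n)) := Function.invFun A '' V with hK_def
  have hKcomp : IsCompact K := (isCompact_closedBall _ _).image hinvc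
  have hKne : K.Nonempty := ⟨Function.invFun A 0,
    Set.mem_image_of_mem _ (Metric.mem_closedBall_self (le_max_right CAR 0))⟩
  -- the minimum of the quadratic form on K × sphere
  set Qf : (EuclideanSpace ℝ (Fin n) × EuclideanSpace ℝ (Fin n)) → ℝ :=
    fun z => ⟪fderiv ℝ G z.1 z.2, fderiv ℝ A z.1 z.2⟫ with hQf_def
  have hQfc : Continuous Qf := by
    have h1 : Continuous (fun z : EuclideanSpace ℝ (Fin n) × EuclideanSpace ℝ (Fin n) =>
        fderiv ℝ G z.1 z.2) :=
      isBoundedBilinearMap_apply.continuous.comp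
        (((hGreg.continuous_fderiv (by norm_cast)).comp continuous_fst).prodMk continuous_snd)
    have h2 : Continuous (fun z : EuclideanSpace ℝ (Fin n) × EuclideanSpace ℝ (Fin n) =>
        fderiv ℝ A z.1 z.2) :=
      isBoundedBilinearMap_apply.continuous.comp
        (((hAreg.continuous_fderiv (by norm_num)).comp continuous_fst).prodMk continuous_snd)
    exact h1.inner h2
  have hScomp : IsCompact (K ×ˢ Metric.sphere (0:EuclideanSpace ℝ (Fin n)) 1) :=
    hKcomp.prod (isCompact_sphere 0 1)
  have hSne : (K ×ˢ Metric.sphere (0:EuclideanSpace ℝ (Fin n)) 1).Nonempty :=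
    hKne.prod (NormedSpace.sphere_nonempty.mpr zero_le_one)
  obtain ⟨z, hzS, hzmin⟩ := hScomp.exists_isMinOn hSne hQfc.continuousOn
  set lam : ℝ := Qf z with hlam_def
  have hz2 : ‖z.2‖ = 1 := by
    have := (Set.mem_prod.mp hzS).2
    rwa [mem_sphere_zero_iff_norm] at this
  have hlam : 0 < lam := hQpos z.1 z.2 (by
    intro h; rw [h] at hz2; simp at hz2)
  have hQlb : ∀ w ∈ K, ∀ ξ : EuclideanSpace ℝ (Fin n),
      lam * ‖ξ‖^2 ≤ ⟪fderiv ℝ G w ξ, fderiv ℝ A w ξ⟫ := by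
    intro w hw ξ
    rcases eq_or_ne ξ 0 with rfl | hξ
    · simp
    · have ha : 0 < ‖ξ‖ := norm_pos_iff.mpr hξ
      have hξ'1 : ‖(‖ξ‖⁻¹ • ξ : EuclideanSpace ℝ (Fin n))‖ = 1 := norm_smul_inv_norm hξ
      have hmem : (w, (‖ξ‖⁻¹ • ξ : EuclideanSpace ℝ (Fin n)))
          ∈ K ×ˢ Metric.sphere (0:EuclideanSpace ℝ (Fin n)) 1 :=
        Set.mem_prod.mpr ⟨hw, by rwa [mem_sphere_zero_iff_norm]⟩
      have hmin := hzmin hmem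
      have hsmul : ξ = ‖ξ‖ • (‖ξ‖⁻¹ • ξ) := by
        rw [smul_smul, mul_inv_cancel₀ ha.ne', one_smul]
      have hscale : ⟪fderiv ℝ G w ξ, fderiv ℝ A w ξ⟫
          = ‖ξ‖ * (‖ξ‖ * ⟪fderiv ℝ G w (‖ξ‖⁻¹ • ξ), fderiv ℝ A w (‖ξ‖⁻¹ • ξ)⟫) := by
        conv_lhs => rw [hsmul]
        simp only [ContinuousLinearMap.map_smul, real_inner_smul_left,
          real_inner_smul_right, smul_smul]
        field_simp
      rw [hscale]
      have hmin' : lam ≤ ⟪fderiv ℝ G w (‖ξ‖⁻¹ • ξ), fderiv ℝ A w (‖ξ‖⁻¹ • ξ)⟫ := hmin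
      nlinarith [sq_nonneg ‖ξ‖, ha]
  -- bound on the differential of A on K
  obtain ⟨L₀, hL₀⟩ := hKcomp.exists_bound_of_continuousOn
    (hAreg.continuous_fderiv (by norm_num)).continuousOn
  set L : ℝ := max L₀ 1 with hL_def
  have hL1 : (1:ℝ) ≤ L := le_max_right _ _
  have hLpos : (0:ℝ) < L := lt_of_lt_of_le one_pos hL1
  refine ⟨R, hRM, lam/(2*L^2), by positivity, 1/4, by norm_num, ?_⟩
  intro u ubar hub
  have hubR : ‖ubar‖ ≤ R := le_trans hub hRM.le
  constructor
  · -- first bound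
    intro huR
    rcases eq_or_ne (A u) (A ubar) with hvv | hvv
    · have : u = ubar := hH1.1 hvv
      rw [this]
      simp
    · set ζ : EuclideanSpace ℝ (Fin n) := A u - A ubar with hζ_def
      have hζne : ζ ≠ 0 := sub_ne_zero.mpr hvv
      set c : ℝ → EuclideanSpace ℝ (Fin n) :=
        fun t => Function.invFun A (A ubar + t • ζ) with hc_def
      have hAc : ∀ t : ℝ, A (c t) = A ubar + t • ζ :=
        fun t => Function.rightInverse_invFun hH1.2 _
      have hc0 : c 0 = ubar := by
        rw [hc_def]; simp only [zero_smul, add_zero]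
        exact Function.leftInverse_invFun hH1.1 ubar
      have hc1 : c 1 = u := by
        rw [hc_def]; simp only [one_smul]
        rw [hζ_def, show A ubar + (A u - A ubar) = A u by abel]
        exact Function.leftInverse_invFun hH1.1 u
      have hcd : ∀ t : ℝ, HasDerivAt c ((e (c t)).symm ζ) t := by
        intro t
        have h1 : HasFDerivAt (Function.invFun A)
            (((e (c t)).symm : EuclideanSpace ℝ (Fin n) →L[ℝ] EuclideanSpace ℝ (Fin n)))
            (A ubar + t • ζ) := by
          have := hinv (c t); rwa [hAc t] at this
        exact h1.comp_hasDerivAt t (aux_line_hasDerivAt (A ubar) ζ t)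
      have hfd : ∀ t : ℝ, fderiv ℝ A (c t) ((e (c t)).symm ζ) = ζ := by
        intro t
        have h1 : fderiv ℝ A (c t) ((e (c t)).symm ζ) = (e (c t)) ((e (c t)).symm ζ) := by
          rw [← he (c t)]; rfl
        rw [h1, (e (c t)).apply_symm_apply]
      have hcK : ∀ t ∈ Set.Icc (0:ℝ) 1, c t ∈ K := by
        intro t ht
        refine Set.mem_image_of_mem _ ?_
        have h2 : A ubar ∈ V := hVA ubar hubR
        have h3 : A u ∈ V := hVA u huR
        exact (convex_closedBall (0:EuclideanSpace ℝ (Fin n)) rV).add_smul_sub_mem h2 h3 ht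
      set μ : ℝ := lam * ‖ζ‖^2 / L^2 with hμ_def
      have hq : ∀ t ∈ Set.Icc (0:ℝ) 1, μ ≤ ⟪fderiv ℝ G (c t) ((e (c t)).symm ζ), ζ⟫ := by
        intro t ht
        have hKt := hcK t ht
        have h2 := hQlb (c t) hKt ((e (c t)).symm ζ)
        rw [hfd t] at h2
        have h1 : ‖ζ‖ ≤ L * ‖((e (c t)).symm ζ : EuclideanSpace ℝ (Fin n))‖ := by
          conv_lhs => rw [← hfd t]
          calc ‖fderiv ℝ A (c t) ((e (c t)).symm ζ)‖
              ≤ ‖fderiv ℝ A (c t)‖ * ‖((e (c t)).symm ζ : EuclideanSpace ℝ (Fin n))‖ :=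
                ContinuousLinearMap.le_opNorm _ _
            _ ≤ L * ‖((e (c t)).symm ζ : EuclideanSpace ℝ (Fin n))‖ := by
                apply mul_le_mul_of_nonneg_right _ (norm_nonneg _)
                exact le_trans (hL₀ _ hKt) (le_max_left _ _)
        have h1sq : ‖ζ‖^2 ≤ L^2 * ‖((e (c t)).symm ζ : EuclideanSpace ℝ (Fin n))‖^2 := by
          nlinarith [norm_nonneg ζ, norm_nonneg ((e (c t)).symm ζ : EuclideanSpace ℝ (Fin n)),
            hLpos]
        rw [hμ_def, div_le_iff₀ (by positivity : (0:ℝ) < L^2)]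
        nlinarith [sq_nonneg L, hlam.le]
      set σ : ℝ → ℝ := fun t => ⟪G (c t), ζ⟫ - ⟪G ubar, ζ⟫ - μ * t with hσ_def
      have hσd : ∀ t : ℝ, HasDerivAt σ (⟪fderiv ℝ G (c t) ((e (c t)).symm ζ), ζ⟫ - μ) t := by
        intro t
        have hGc : HasDerivAt (fun s => G (c s)) (fderiv ℝ G (c t) ((e (c t)).symm ζ)) t :=
          ((hGreg.differentiable (by norm_cast) (c t)).hasFDerivAt).comp_hasDerivAt t (hcd t)
        have hin : HasDerivAt (fun s => ⟪G (c s), ζ⟫)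
            (⟪fderiv ℝ G (c t) ((e (c t)).symm ζ), ζ⟫) t := by
          simpa using hGc.inner ℝ (hasDerivAt_const t ζ)
        have h1 := (hin.sub_const (⟪G ubar, ζ⟫)).sub ((hasDerivAt_id t).const_mul μ)
        exact h1.congr_deriv (by ring)
      have hσ0 : σ 0 = 0 := by
        rw [hσ_def]; simp [hc0]
      have hσmono : MonotoneOn σ (Set.Icc (0:ℝ) 1) := by
        apply monotoneOn_of_deriv_nonneg (convex_Icc 0 1)
        · exact fun t _ => ((hσd t).differentiableAt.continuousAt).continuousWithinAt
        · exact fun t _ => ((hσd t).differentiableAt.differentiableWithinAt)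
        · intro t ht
          rw [interior_Icc] at ht
          rw [(hσd t).deriv]
          have := hq t ⟨ht.1.le, ht.2.le⟩
          linarith
      have hσnn : ∀ t ∈ Set.Icc (0:ℝ) 1, 0 ≤ σ t := by
        intro t ht
        have := hσmono (Set.left_mem_Icc.mpr zero_le_one) ht ht.1
        rwa [hσ0] at this
      set ρ : ℝ → ℝ := fun t => η (c t) - η ubar - t * ⟪G ubar, ζ⟫ - μ / 2 * t^2 with hρ_def
      have hρd : ∀ t : ℝ, HasDerivAt ρ (σ t) t := by
        intro t
        have hηc : HasDerivAt (fun s => η (c s)) (⟪G (c t), ζ⟫) t := by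
          have h0 : HasDerivAt (fun s => η (c s)) (fderiv ℝ η (c t) ((e (c t)).symm ζ)) t :=
            ((hηreg.differentiable (by norm_cast) (c t)).hasFDerivAt).comp_hasDerivAt t (hcd t)
          rwa [hH2η, hfd t] at h0
        have h1 := ((hηc.sub_const (η ubar)).sub
          ((hasDerivAt_id t).mul_const (⟪G ubar, ζ⟫))).sub
          ((hasDerivAt_pow 2 t).const_mul (μ/2))
        refine HasDerivAt.congr_deriv h1 ?_
        rw [hσ_def]; push_cast; ring
      have hρmono : MonotoneOn ρ (Set.Icc (0:ℝ) 1) := by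
        apply monotoneOn_of_deriv_nonneg (convex_Icc 0 1)
        · exact fun t _ => ((hρd t).differentiableAt.continuousAt).continuousWithinAt
        · exact fun t _ => ((hρd t).differentiableAt.differentiableWithinAt)
        · intro t ht
          rw [interior_Icc] at ht
          rw [(hρd t).deriv]
          exact hσnn t ⟨ht.1.le, ht.2.le⟩
      have hρ0 : ρ 0 = 0 := by rw [hρ_def]; simp [hc0]
      have hfin := hρmono (Set.left_mem_Icc.mpr zero_le_one)
        (Set.right_mem_Icc.mpr zero_le_one) zero_le_one
      rw [hρ0, hρ_def] at hfin
      simp only [hc1, one_mul, one_pow] at hfin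
      have hμc : lam / (2*L^2) * ‖ζ‖^2 = μ / 2 := by
        rw [hμ_def]; ring
      have hgoal : lam / (2*L^2) * ‖ζ‖^2 ≤ η u - η ubar - ⟪G ubar, ζ⟫ := by
        rw [hμc]; linarith
      exact hgoal
  · -- second bound
    intro hRu
    have h1u : (1:ℝ) ≤ ‖u‖ := le_trans hR1 hRu
    have hpow : ‖u‖ ≤ ‖u‖ ^ p := by
      calc ‖u‖ = ‖u‖ ^ (1:ℝ) := (Real.rpow_one _).symm
        _ ≤ ‖u‖ ^ p := Real.rpow_le_rpow_of_exponent_le h1u hp.le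
    have hTB : T + B ≤ β₁ * ‖u‖ := by
      have h := le_trans hRT hRu
      rw [div_le_iff₀ hβ₁] at h
      linarith [h]
    have hηuT : T ≤ η u := by
      have hA1u := (hA1 u).1
      nlinarith [mul_le_mul_of_nonneg_left hpow hβ₁.le]
    have hηupos : 0 < η u := lt_of_lt_of_le hTpos hηuT
    have hAu : ‖A u‖ ≤ 1/(2*CG') * η u := hR₀ u (le_trans hRR₀ hRu)
    have hubmem : ubar ∈ Metric.closedBall (0:EuclideanSpace ℝ (Fin n)) M := by
      rwa [Metric.mem_closedBall, dist_zero_right]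
    have hGub : ‖G ubar‖ ≤ CG' := le_trans (hCG ubar hubmem) (le_max_left _ _)
    have hAub : ‖A ubar‖ ≤ CA' := le_trans (hCA ubar hubmem) (le_max_left _ _)
    have hηub : |η ubar| ≤ Cη' :=
      le_trans (by rw [← Real.norm_eq_abs]; exact hCη ubar hubmem) (le_max_left _ _)
    have hip : ⟪G ubar, A u - A ubar⟫ ≤ CG' * (‖A u‖ + CA') := by
      calc ⟪G ubar, A u - A ubar⟫ ≤ ‖G ubar‖ * ‖A u - A ubar‖ := real_inner_le_norm _ _
        _ ≤ CG' * (‖A u‖ + CA') :=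
            mul_le_mul hGub (le_trans (norm_sub_le _ _) (by linarith))
              (norm_nonneg _) hCG'pos.le
    rw [mul_add] at hip
    have hkey : CG' * (1/(2*CG') * η u) = η u / 2 := by
      field_simp [hCG'pos.ne']
    have h2 : CG' * ‖A u‖ ≤ η u / 2 := by
      rw [← hkey]; exact mul_le_mul_of_nonneg_left hAu hCG'pos.le
    have habs := abs_le.mp hηub
    rw [hT_def] at hηuT
    linarith [hip, h2, habs.2, hηuT]
end
end
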